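/- arXiv:2405.01706 — 6 statements merged into one kernel-verified Lean document; each statement's English description precedes it below -/
import Mathlib

section
/- Let X be a dendroid (hereditarily unicoherent, arcwise connected continuum) in the plane ℝ², and let U be an open subset of ℝ² such that X \ U is connected. Then for any connected component W of U, the set X \ W is connected. -/
open Set Filter Topology

/-- The Euclidean plane. -/
abbrev Plane := EuclideanSpace ℝ (Fin 2)

section Defs

variable {α : Type*} [TopologicalSpace α]

/-- `A` is an arc with endpoints `a` and `b`: a homeomorphic image of `[0,1]`
sending `0 ↦ a` and `1 ↦ b`. -/
def IsArcWithEndpoints (A : Set α) (a b : α) : Prop :=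
  ∃ f : ℝ → α, ContinuousOn f (Set.Icc 0 1) ∧ Set.InjOn f (Set.Icc 0 1) ∧
    f '' (Set.Icc 0 1) = A ∧ f 0 = a ∧ f 1 = b

/-- `A` is an arc. -/
def IsArc (A : Set α) : Prop := ∃ a b, IsArcWithEndpoints A a b

/-- Every two distinct points of `X` are joined by an arc inside `X`. -/
def ArcwiseConnected (X : Set α) : Prop :=
  ∀ x ∈ X, ∀ y ∈ X, x ≠ y → ∃ A, A ⊆ X ∧ IsArcWithEndpoints A x y

/-- Every two subcontinua of `X` have connected intersection. -/
def HereditarilyUnicoherent (X : Set α) : Prop :=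
  ∀ K L : Set α, K ⊆ X → L ⊆ X → IsCompact K → IsConnected K →
    IsCompact L → IsConnected L → IsPreconnected (K ∩ L)

/-- A dendroid: a hereditarily unicoherent, arcwise connected continuum. -/
def IsDendroid (X : Set α) : Prop :=
  IsCompact X ∧ IsConnected X ∧ HereditarilyUnicoherent X ∧ ArcwiseConnected X

/-- The set of endpoints of `X`: points that are endpoints of every arc in `X`
containing them. -/
def Endpoints (X : Set α) : Set α :=
  {e | e ∈ X ∧ ∀ A : Set α, A ⊆ X → IsArc A → e ∈ A → ∃ b, IsArcWithEndpoints A e b}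

/-- `X` is Suslinian: every collection of pairwise-disjoint non-degenerate
subcontinua of `X` is countable. -/
def IsSuslinian (X : Set α) : Prop :=
  ∀ S : Set (Set α), (∀ K ∈ S, K ⊆ X ∧ IsCompact K ∧ IsConnected K ∧ K.Nontrivial) →
    S.PairwiseDisjoint id → S.Countable

/-- The arc component of `x` inside the set `S`. -/
def arcComponentIn (S : Set α) (x : α) : Set α :=
  {y | y ∈ S ∧ (y = x ∨ ∃ A, A ⊆ S ∧ IsArcWithEndpoints A x y)}

/-- The collection of arc components of `X \ {x}`; its cardinality is the order of `x`. -/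
def orderComponents (X : Set α) (x : α) : Set (Set α) :=
  {C | ∃ y ∈ X \ {x}, C = arcComponentIn (X \ {x}) y}

/-- Ramification points of `X`: points of order at least 3. -/
def RamificationPoints (X : Set α) : Set α :=
  {x | x ∈ X ∧ 3 ≤ (orderComponents X x).encard}

/-- `A` is a clopen subset of the subspace `Y`. -/
def IsClopenIn (Y A : Set α) : Prop :=
  A ⊆ Y ∧ (∃ U, IsOpen U ∧ A = Y ∩ U) ∧ (∃ C, IsClosed C ∧ A = Y ∩ C)

/-- The quasicomponent of `x` in the subspace `Y`: the intersection of all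
clopen subsets of `Y` containing `x`. -/
def quasicomponentIn (Y : Set α) (x : α) : Set α :=
  {y ∈ Y | ∀ A : Set α, IsClopenIn Y A → x ∈ A → y ∈ A}

/-- `Y` is hereditarily disconnected: it contains no non-degenerate connected subset. -/
def HereditarilyDisconnected (Y : Set α) : Prop :=
  ∀ S : Set α, S ⊆ Y → IsPreconnected S → S.Subsingleton

end Defs

/-- The point `x` of `X` is (arcwise) accessible from `ℝ² \ X`. -/
def AccessiblePoint (X : Set Plane) (x : Plane) : Prop :=
  ∃ A : Set Plane, IsArc A ∧ A ∩ X = {x}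

/-- `σ` separates the points `b` and `d` in the plane: no connected subset of the
complement of `σ` contains both. -/
def SeparatesPoints (σ : Set Plane) (b d : Plane) : Prop :=
  b ∉ σ ∧ d ∉ σ ∧ ∀ K : Set Plane, K ⊆ σᶜ → IsPreconnected K → b ∈ K → d ∉ K

/-- A simple closed curve in the plane: the image of a period-1 parametrization
injective on `[0,1)`. -/
def IsSimpleClosedCurve (O : Set Plane) : Prop :=
  ∃ f : ℝ → Plane, Continuous f ∧ Function.Periodic f 1 ∧
    Set.InjOn f (Set.Ico 0 1) ∧ f '' (Set.Ico 0 1) = O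

/-- The dendroid `X` is smooth at `p`: there is a choice `arcTo x` of the unique arc
from `x` to `p` (reduced to `{p}` for `x = p`) such that `xₙ → x` in `X` implies
`arcTo xₙ → arcTo x` in the Hausdorff distance. -/
def DendroidSmoothAt (X : Set Plane) (p : Plane) : Prop :=
  p ∈ X ∧ ∃ arcTo : Plane → Set Plane,
    arcTo p = {p} ∧
    (∀ x ∈ X, x ≠ p → arcTo x ⊆ X ∧ IsArcWithEndpoints (arcTo x) x p) ∧
    (∀ (xs : ℕ → Plane) (x : Plane), (∀ n, xs n ∈ X) → x ∈ X →
      Filter.Tendsto xs Filter.atTop (nhds x) →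
      Filter.Tendsto (fun n => EMetric.hausdorffEdist (arcTo (xs n)) (arcTo x))
        Filter.atTop (nhds 0))

/-- A space is zero-dimensional if it has a basis of clopen sets. -/
def IsZeroDimensionalSpace (β : Type*) [TopologicalSpace β] : Prop :=
  ∀ (x : β) (U : Set β), IsOpen U → x ∈ U → ∃ V : Set β, IsClopen V ∧ x ∈ V ∧ V ⊆ U

/-- A space is almost zero-dimensional if it has a neighborhood basis of sets
which are intersections of clopen sets. -/
def IsAlmostZeroDimensionalSpace (β : Type*) [TopologicalSpace β] : Prop :=
  ∀ (x : β) (U : Set β), IsOpen U → x ∈ U →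
    ∃ V : Set β, V ∈ nhds x ∧ V ⊆ U ∧
      ∃ 𝒞 : Set (Set β), (∀ C ∈ 𝒞, IsClopen C) ∧ V = ⋂₀ 𝒞

/-- The union of `W` with all of the bounded connected components of its complement. -/
def boundedComplementaryFill (W : Set Plane) : Set Plane :=
  W ∪ ⋃₀ {K | (∃ x ∈ Wᶜ, K = connectedComponentIn Wᶜ x) ∧ Bornology.IsBounded K}

/-- A Bellamy dendroid: a (non-degenerate) smooth plane dendroid whose endpoint
set is connected. -/
def IsBellamyDendroid (K : Set Plane) : Prop :=
  IsDendroid K ∧ K.Nontrivial ∧ (∃ q, DendroidSmoothAt K q) ∧ IsConnected (Endpoints K)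

/-- The middle-thirds Cantor set. -/
noncomputable def cantorC : Set ℝ :=
  {x | ∃ a : ℕ → Bool, x = ∑' i, (if a i then (2 : ℝ) else 0) / 3 ^ (i + 1)}

/-- The frontier of a connected component of an open set lies outside the open set. -/
lemma frontier_componentIn_subset {U : Set Plane} (hU : IsOpen U) (u : Plane) :
    closure (connectedComponentIn U u) \ connectedComponentIn U u ⊆ Uᶜ := by
  rintro x ⟨hxc, hxn⟩ hxU
  have hopen : IsOpen (connectedComponentIn U x) := hU.connectedComponentIn
  have hmem : x ∈ connectedComponentIn U x := mem_connectedComponentIn hxU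
  obtain ⟨y, hyC, hyW⟩ := (_root_.mem_closure_iff.1 hxc) _ hopen hmem
  have h1 : connectedComponentIn U x = connectedComponentIn U y := connectedComponentIn_eq hyC
  have h2 : connectedComponentIn U u = connectedComponentIn U y := connectedComponentIn_eq hyW
  exact hxn (h2 ▸ h1 ▸ hmem)

/-- Core separation argument: an arc from `A` to `B` would have to cross the
frontier of `W`, which lies in `X \ U ⊆ A`. -/
lemma stmt_0_core {X U W A B : Set Plane}
    (harc : ArcwiseConnected X)
    (hfr : closure W \ W ⊆ Uᶜ)
    (hA : IsClosed A) (hB : IsClosed B) (hAB : Disjoint A B)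
    (hcover : X \ W = A ∪ B) (hXUA : X \ U ⊆ A)
    {a b : Plane} (ha : a ∈ A) (hb : b ∈ B) : False := by
  have hAX : A ⊆ X \ W := hcover ▸ subset_union_left
  have hBX : B ⊆ X \ W := hcover ▸ subset_union_right
  have hab : a ≠ b := hAB.ne_of_mem ha hb
  obtain ⟨Ar, hArX, f, hfc, hfi, hfim, hf0, hf1⟩ :=
    harc a (hAX ha).1 b (hBX hb).1 hab
  have hmem : ∀ t ∈ Icc (0:ℝ) 1, f t ∈ X := fun t ht =>
    hArX (hfim ▸ mem_image_of_mem f ht)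
  set S : Set ℝ := Icc (0:ℝ) 1 ∩ f ⁻¹' B with hSdef
  have hScl : IsClosed S := hfc.preimage_isClosed_of_isClosed isClosed_Icc hB
  have h1S : (1:ℝ) ∈ S := ⟨⟨zero_le_one, le_refl 1⟩, by simp [hf1, hb]⟩
  have hbdd : BddBelow S := ⟨0, fun t ht => ht.1.1⟩
  set s := sInf S with hsdef
  have hsS : s ∈ S := hScl.csInf_mem ⟨1, h1S⟩ hbdd
  have hspos : 0 < s := by
    rcases hsS.1.1.lt_or_eq with h | h
    · exact h
    · exact (hAB.ne_of_mem ha hsS.2 (by rw [← h, hf0])).elim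
  have hcw : ContinuousWithinAt f (Ico 0 s) s :=
    (hfc s hsS.1).mono (fun t ht => ⟨ht.1, ht.2.le.trans hsS.1.2⟩)
  have hscl : s ∈ closure (Ico (0:ℝ) s) := by
    rw [closure_Ico hspos.ne]
    exact ⟨hspos.le, le_refl s⟩
  have him : f '' (Ico 0 s) ⊆ A ∪ W := by
    rintro _ ⟨t, ht, rfl⟩
    have htI : t ∈ Icc (0:ℝ) 1 := ⟨ht.1, ht.2.le.trans hsS.1.2⟩
    by_cases hWt : f t ∈ W
    · exact Or.inr hWt
    · have hAB' : f t ∈ A ∪ B := hcover ▸ ⟨hmem t htI, hWt⟩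
      rcases hAB' with h | h
      · exact Or.inl h
      · exact absurd (csInf_le hbdd ⟨htI, h⟩) (not_le.2 ht.2)
  have hfscl : f s ∈ closure (A ∪ W) :=
    closure_mono him (hcw.mem_closure_image hscl)
  have hfsW : f s ∈ closure W := by
    rw [closure_union, hA.closure_eq] at hfscl
    rcases hfscl with h | h
    · exact absurd rfl (hAB.ne_of_mem h hsS.2)
    · exact h
  have hfsnW : f s ∉ W := (hBX hsS.2).2
  have hXU' : f s ∈ X \ U := ⟨(hBX hsS.2).1, hfr ⟨hfsW, hfsnW⟩⟩
  exact hAB.ne_of_mem (hXUA hXU') hsS.2 rfl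

/-- Lemma 3. -/
theorem stmt_0 (X U : Set Plane) (hX : IsDendroid X) (hU : IsOpen U)
    (hXU : IsPreconnected (X \ U))
    (W : Set Plane) (hW : ∃ u ∈ U, W = connectedComponentIn U u) :
    IsPreconnected (X \ W) := by
  obtain ⟨u0, hu0, rfl⟩ := hW
  set W := connectedComponentIn U u0 with hWdef
  have hWo : IsOpen W := hU.connectedComponentIn
  have hfr : closure W \ W ⊆ Uᶜ := frontier_componentIn_subset hU u0
  have harc : ArcwiseConnected X := hX.2.2.2
  have hXWcl : IsClosed (X \ W) := hX.1.isClosed.sdiff hWo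
  intro v w hv hw hcov ⟨a, haX, hav⟩ ⟨b, hbX, hbw⟩
  by_contra hne
  rw [not_nonempty_iff_eq_empty] at hne
  set A : Set Plane := (X \ W) \ w with hAdef
  set B : Set Plane := (X \ W) \ v with hBdef
  have hA : IsClosed A := hXWcl.sdiff hw
  have hB : IsClosed B := hXWcl.sdiff hv
  have hAB : Disjoint A B := by
    rw [Set.disjoint_left]
    rintro x ⟨hx, hxw⟩ ⟨_, hxv⟩
    rcases hcov hx with h | h
    · exact hxv h
    · exact hxw h
  have hcover : X \ W = A ∪ B := by
    apply Subset.antisymm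
    · intro x hx
      by_cases hxw : x ∈ w
      · refine Or.inr ⟨hx, fun hxv => ?_⟩
        have : x ∈ (X \ W) ∩ (v ∩ w) := ⟨hx, hxv, hxw⟩
        simp [hne] at this
      · exact Or.inl ⟨hx, hxw⟩
    · rintro x (⟨hx, _⟩ | ⟨hx, _⟩) <;> exact hx
  have ha' : a ∈ A := by
    refine ⟨haX, fun haw => ?_⟩
    have : a ∈ (X \ W) ∩ (v ∩ w) := ⟨haX, hav, haw⟩
    simp [hne] at this
  have hb' : b ∈ B := by
    refine ⟨hbX, fun hbv => ?_⟩
    have : b ∈ (X \ W) ∩ (v ∩ w) := ⟨hbX, hbv, hbw⟩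
    simp [hne] at this
  have hsub : X \ U ⊆ X \ W := fun x hx =>
    ⟨hx.1, fun hxW => hx.2 (connectedComponentIn_subset U u0 hxW)⟩
  by_cases hcase : (X \ U ∩ w).Nonempty
  · have hXUB : X \ U ⊆ B := by
      intro x hx
      refine ⟨hsub hx, fun hxv => ?_⟩
      obtain ⟨y, hy1, hy2⟩ := hXU v w hv hw (hsub.trans hcov) ⟨x, hx, hxv⟩ hcase
      have : y ∈ (X \ W) ∩ (v ∩ w) := ⟨hsub hy1, hy2⟩
      simp [hne] at this
    exact stmt_0_core harc hfr hB hA hAB.symm (union_comm A B ▸ hcover) hXUB hb' ha'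
  · have hXUA : X \ U ⊆ A := fun x hx =>
      ⟨hsub hx, fun hxw => hcase ⟨x, hx, hxw⟩⟩
    exact stmt_0_core harc hfr hA hB hAB hcover hXUA ha' hb'
end

section
/- Let X be a dendroid. Then X is Suslinian if and only if X \ E(X) is a countable union of arcs. -/
open Set Filter Topology

section AuxProof

variable {α : Type*} [MetricSpace α]

lemma myArc.left_mem {A : Set α} {a b : α} (h : IsArcWithEndpoints A a b) : a ∈ A := by
  obtain ⟨f, hc, hi, him, h0, h1⟩ := h
  rw [← him, ← h0]
  exact Set.mem_image_of_mem f (Set.left_mem_Icc.2 zero_le_one)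

lemma myArc.symm {A : Set α} {a b : α} (h : IsArcWithEndpoints A a b) :
    IsArcWithEndpoints A b a := by
  obtain ⟨f, hc, hi, him, h0, h1⟩ := h
  have hmaps : ∀ r ∈ Set.Icc (0:ℝ) 1, (1 - r) ∈ Set.Icc (0:ℝ) 1 := by
    intro r hr; exact ⟨by linarith [hr.2], by linarith [hr.1]⟩
  refine ⟨fun r => f (1 - r), ?_, ?_, ?_, by simpa using h1, by simpa using h0⟩
  · exact hc.comp ((continuous_const.sub continuous_id).continuousOn) hmaps
  · intro r hr s hs hfe
    have := hi (hmaps r hr) (hmaps s hs) hfe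
    linarith
  · rw [show (fun r => f (1 - r)) = f ∘ (fun r : ℝ => 1 - r) from rfl, Set.image_comp]
    rw [show (fun r : ℝ => 1 - r) = (fun r : ℝ => (1:ℝ) - r) from rfl]
    rw [Set.image_const_sub_Icc]
    simpa using him

lemma myArc.right_mem {A : Set α} {a b : α} (h : IsArcWithEndpoints A a b) : b ∈ A :=
  myArc.left_mem (myArc.symm h)

lemma myArc.compact {A : Set α} {a b : α} (h : IsArcWithEndpoints A a b) : IsCompact A := by
  obtain ⟨f, hc, hi, him, h0, h1⟩ := h
  rw [← him]; exact isCompact_Icc.image_of_continuousOn hc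

lemma myArc.connected {A : Set α} {a b : α} (h : IsArcWithEndpoints A a b) : IsConnected A := by
  obtain ⟨f, hc, hi, him, h0, h1⟩ := h
  rw [← him]
  exact ⟨⟨f 0, Set.mem_image_of_mem f (Set.left_mem_Icc.2 zero_le_one)⟩,
    isPreconnected_Icc.image f hc⟩

lemma myArc.ne {A : Set α} {a b : α} (h : IsArcWithEndpoints A a b) : a ≠ b := by
  obtain ⟨f, hc, hi, him, h0, h1⟩ := h
  intro hab
  have : (0:ℝ) = 1 := hi (Set.left_mem_Icc.2 zero_le_one) (Set.right_mem_Icc.2 zero_le_one)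
    (by rw [h0, h1, hab])
  norm_num at this

lemma myArc.nontrivial {A : Set α} {a b : α} (h : IsArcWithEndpoints A a b) : A.Nontrivial :=
  ⟨a, myArc.left_mem h, b, myArc.right_mem h, myArc.ne h⟩

lemma myArc.nonempty {A : Set α} {a b : α} (h : IsArcWithEndpoints A a b) : A.Nonempty :=
  ⟨a, myArc.left_mem h⟩

/-- transfer of preconnectedness through an arc parametrization -/
lemma my_preconn_transfer {f : ℝ → α} (hc : ContinuousOn f (Set.Icc 0 1))
    (hi : Set.InjOn f (Set.Icc 0 1)) {T : Set ℝ} (hT : T ⊆ Set.Icc 0 1) :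
    IsPreconnected (f '' T) ↔ IsPreconnected T := by
  haveI : CompactSpace (Set.Icc (0:ℝ) 1) := isCompact_iff_compactSpace.mp isCompact_Icc
  let g : Set.Icc (0:ℝ) 1 → (f '' Set.Icc 0 1 : Set α) :=
    fun x => ⟨f x, Set.mem_image_of_mem f x.2⟩
  have hgc : Continuous g := Continuous.subtype_mk (hc.restrict) _
  have hgbij : Function.Bijective g := by
    constructor
    · intro x y hxy
      exact Subtype.ext (hi x.2 y.2 (congrArg Subtype.val hxy))
    · rintro ⟨_, t, ht, rfl⟩
      exact ⟨⟨t, ht⟩, rfl⟩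
  have hgceq : Continuous (Equiv.ofBijective g hgbij) := hgc
  let e := Continuous.homeoOfEquivCompactToT2 hgceq
  have key : f '' T = Subtype.val '' (⇑e '' (Subtype.val ⁻¹' T)) := by
    rw [← Set.image_comp]
    ext z
    constructor
    · rintro ⟨t, htT, rfl⟩
      exact ⟨⟨t, hT htT⟩, htT, rfl⟩
    · rintro ⟨⟨t, ht⟩, htT, rfl⟩
      exact ⟨t, htT, rfl⟩
  have hval : Subtype.val '' (Subtype.val ⁻¹' T : Set (Set.Icc (0:ℝ) 1)) = T := by
    ext z
    constructor
    · rintro ⟨⟨t, ht⟩, htT, rfl⟩; exact htT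
    · intro hz; exact ⟨⟨z, hT hz⟩, hz, rfl⟩
  calc IsPreconnected (f '' T)
      ↔ IsPreconnected (⇑e '' (Subtype.val ⁻¹' T)) := by
        rw [key]; exact Topology.IsInducing.subtypeVal.isPreconnected_image
    _ ↔ IsPreconnected ((Subtype.val ⁻¹' T : Set (Set.Icc (0:ℝ) 1))) :=
        e.isPreconnected_image
    _ ↔ IsPreconnected T := by
        have h4 := (Topology.IsInducing.subtypeVal (t := Set.Icc (0:ℝ) 1)).isPreconnected_image
          (s := (Subtype.val ⁻¹' T : Set (Set.Icc (0:ℝ) 1)))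
        rw [hval] at h4
        exact h4.symm

/-- subarc -/
lemma myArc.subarc {f : ℝ → α} (hc : ContinuousOn f (Set.Icc 0 1))
    (hi : Set.InjOn f (Set.Icc 0 1)) {s t : ℝ} (h0 : 0 ≤ s) (hst : s < t) (h1 : t ≤ 1) :
    IsArcWithEndpoints (f '' Set.Icc s t) (f s) (f t) := by
  have hsub : Set.Icc s t ⊆ Set.Icc (0:ℝ) 1 := Set.Icc_subset_Icc h0 h1
  have haff : (fun r : ℝ => (t - s) * r + s) '' Set.Icc 0 1 = Set.Icc s t := by
    rw [Set.image_affine_Icc' (by linarith : (0:ℝ) < t - s)]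
    norm_num
  have hmaps : ∀ r ∈ Set.Icc (0:ℝ) 1, ((t - s) * r + s) ∈ Set.Icc s t := by
    intro r hr
    constructor
    · nlinarith [hr.1]
    · nlinarith [hr.2]
  refine ⟨fun r => f ((t - s) * r + s), ?_, ?_, ?_, by norm_num, by ring_nf⟩
  · exact (hc.mono hsub).comp
      ((continuous_const.mul continuous_id).add continuous_const).continuousOn hmaps
  · intro r hr q hq hfe
    have := hi (hsub (hmaps r hr)) (hsub (hmaps q hq)) hfe
    have hts : t - s ≠ 0 := by linarith
    field_simp at this
    have h3 : (t - s) * (r - q) = 0 := by linarith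
    rcases mul_eq_zero.1 h3 with h | h
    · exact absurd h hts
    · linarith
  · rw [show (fun r => f ((t - s) * r + s)) = f ∘ (fun r : ℝ => (t - s) * r + s) from rfl,
      Set.image_comp, haff]

/-- any subcontinuum of a dendroid containing the endpoints of an arc contains the arc -/
lemma myArc.subset_subcont {X A K : Set α} {a b : α} (hX : IsDendroid X)
    (hA : A ⊆ X) (h : IsArcWithEndpoints A a b) (hK : K ⊆ X) (hKc : IsCompact K)
    (hKconn : IsConnected K) (ha : a ∈ K) (hb : b ∈ K) : A ⊆ K := by
  obtain ⟨f, hc, hi, him, h0, h1⟩ := h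
  set T := Set.Icc (0:ℝ) 1 ∩ f ⁻¹' K with hT
  have hTsub : T ⊆ Set.Icc (0:ℝ) 1 := Set.inter_subset_left
  have himT : f '' T = A ∩ K := by rw [hT, Set.image_inter_preimage, him]
  have hpre : IsPreconnected (A ∩ K) := by
    refine hX.2.2.1 A K hA hK (myArc.compact ⟨f, hc, hi, him, h0, h1⟩)
      (myArc.connected ⟨f, hc, hi, him, h0, h1⟩) hKc hKconn
  have hTpre : IsPreconnected T := by
    rw [← my_preconn_transfer hc hi hTsub, himT]; exact hpre
  have h0T : (0:ℝ) ∈ T := ⟨Set.left_mem_Icc.2 zero_le_one, by rw [Set.mem_preimage, h0]; exact ha⟩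
  have h1T : (1:ℝ) ∈ T := ⟨Set.right_mem_Icc.2 zero_le_one, by rw [Set.mem_preimage, h1]; exact hb⟩
  have : Set.Icc (0:ℝ) 1 ⊆ T := hTpre.Icc_subset h0T h1T
  intro z hz
  rw [← him] at hz
  obtain ⟨t, ht, rfl⟩ := hz
  exact (this ht).2

/-- the "segment": intersection of all subcontinua of `X` containing `a` and `b`. -/
def mySeg (X : Set α) (a b : α) : Set α :=
  ⋂₀ {K | K ⊆ X ∧ IsCompact K ∧ IsConnected K ∧ a ∈ K ∧ b ∈ K}

lemma mySeg.subset_of {X K : Set α} {a b : α} (hK : K ⊆ X) (hKc : IsCompact K)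
    (hKconn : IsConnected K) (ha : a ∈ K) (hb : b ∈ K) : mySeg X a b ⊆ K :=
  Set.sInter_subset_of_mem ⟨hK, hKc, hKconn, ha, hb⟩

lemma mySeg.mem_left {X : Set α} {a b : α} : a ∈ mySeg X a b :=
  Set.mem_sInter.2 fun _ hK => hK.2.2.2.1

lemma mySeg.mem_right {X : Set α} {a b : α} : b ∈ mySeg X a b :=
  Set.mem_sInter.2 fun _ hK => hK.2.2.2.2

lemma mySeg.eq_arc {X A : Set α} {a b : α} (hX : IsDendroid X) (hA : A ⊆ X)
    (h : IsArcWithEndpoints A a b) : mySeg X a b = A := by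
  apply Set.Subset.antisymm
  · exact mySeg.subset_of hA (myArc.compact h) (myArc.connected h)
      (myArc.left_mem h) (myArc.right_mem h)
  · intro z hz
    refine Set.mem_sInter.2 fun K hK => ?_
    exact myArc.subset_subcont hX hA h hK.1 hK.2.1 hK.2.2.1 hK.2.2.2.1 hK.2.2.2.2 hz

lemma mySeg.self {X : Set α} {a : α} (ha : a ∈ X) : mySeg X a a = {a} := by
  apply Set.Subset.antisymm
  · exact mySeg.subset_of (by simpa using ha) isCompact_singleton isConnected_singleton
      rfl rfl
  · intro z hz
    rw [Set.mem_singleton_iff] at hz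
    subst hz
    exact mySeg.mem_left

lemma mySeg.arc {X : Set α} {a b : α} (hX : IsDendroid X) (ha : a ∈ X) (hb : b ∈ X)
    (hab : a ≠ b) : mySeg X a b ⊆ X ∧ IsArcWithEndpoints (mySeg X a b) a b := by
  obtain ⟨A, hAX, hA⟩ := hX.2.2.2 a ha b hb hab
  rw [mySeg.eq_arc hX hAX hA]
  exact ⟨hAX, hA⟩

lemma mySeg.subcont {X : Set α} {a b : α} (hX : IsDendroid X) (ha : a ∈ X) (hb : b ∈ X) :
    mySeg X a b ⊆ X ∧ IsCompact (mySeg X a b) ∧ IsConnected (mySeg X a b) := by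
  rcases eq_or_ne a b with rfl | hab
  · rw [mySeg.self ha]
    exact ⟨by simpa using ha, isCompact_singleton, isConnected_singleton⟩
  · obtain ⟨h1, h2⟩ := mySeg.arc hX ha hb hab
    exact ⟨h1, myArc.compact h2, myArc.connected h2⟩

/-- removal of an endpoint keeps an arc preconnected -/
lemma myArc.preconn_diff_left {A : Set α} {a b : α} (h : IsArcWithEndpoints A a b) :
    IsPreconnected (A \ {a}) := by
  obtain ⟨f, hc, hi, him, h0, h1⟩ := h
  have : A \ {a} = f '' Set.Ioc 0 1 := by
    ext z
    constructor
    · rintro ⟨hz, hza⟩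
      rw [← him] at hz
      obtain ⟨t, ht, rfl⟩ := hz
      refine ⟨t, ⟨?_, ht.2⟩, rfl⟩
      rcases eq_or_lt_of_le ht.1 with rfl | h'
      · exact absurd h0 hza
      · exact h'
    · rintro ⟨t, ht, rfl⟩
      have htIcc : t ∈ Set.Icc (0:ℝ) 1 := ⟨le_of_lt ht.1, ht.2⟩
      refine ⟨him ▸ Set.mem_image_of_mem f htIcc, ?_⟩
      rw [Set.mem_singleton_iff, ← h0]
      intro he
      have := hi htIcc (Set.left_mem_Icc.2 zero_le_one) he
      exact absurd this (ne_of_gt ht.1)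
  rw [this]
  exact isPreconnected_Ioc.image f (hc.mono Set.Ioc_subset_Icc_self)

/-- removal of an interior point disconnects an arc -/
lemma myArc.not_preconn_diff_mid {f : ℝ → α} (hc : ContinuousOn f (Set.Icc 0 1))
    (hi : Set.InjOn f (Set.Icc 0 1)) {t : ℝ} (ht : t ∈ Set.Ioo (0:ℝ) 1) :
    ¬ IsPreconnected ((f '' Set.Icc 0 1) \ {f t}) := by
  have hdiff : (f '' Set.Icc 0 1) \ {f t} = f '' (Set.Icc 0 1 \ {t}) := by
    ext z
    constructor
    · rintro ⟨⟨s, hs, rfl⟩, hzt⟩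
      refine ⟨s, ⟨hs, ?_⟩, rfl⟩
      intro hst
      rw [Set.mem_singleton_iff] at hst
      subst hst
      exact hzt rfl
    · rintro ⟨s, ⟨hs, hst⟩, rfl⟩
      refine ⟨Set.mem_image_of_mem f hs, ?_⟩
      rw [Set.mem_singleton_iff]
      intro he
      exact hst (hi hs ⟨le_of_lt ht.1, le_of_lt ht.2⟩ he)
  rw [hdiff, my_preconn_transfer hc hi Set.diff_subset]
  intro hpre
  have := hpre (Set.Iio t) (Set.Ioi t) isOpen_Iio isOpen_Ioi
    (by intro z hz
        rcases lt_or_gt_of_ne (fun he => hz.2 (by simpa using he)) with h' | h'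
        · exact Or.inl h'
        · exact Or.inr h')
    ⟨0, ⟨⟨Set.left_mem_Icc.2 zero_le_one, by simpa using (ne_of_lt ht.1)⟩, ht.1⟩⟩
    ⟨1, ⟨⟨Set.right_mem_Icc.2 zero_le_one, by simpa using (ne_of_gt ht.2)⟩, ht.2⟩⟩
  obtain ⟨z, _, hz1, hz2⟩ := this
  exact absurd (lt_trans hz1 hz2) (lt_irrefl z)

/-- interior points of an arc in `X` are not endpoints of `X` -/
lemma myArc.interior_not_endpoint {X A : Set α} {a b : α} (hA : A ⊆ X)
    {f : ℝ → α} (hc : ContinuousOn f (Set.Icc 0 1)) (hi : Set.InjOn f (Set.Icc 0 1))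
    (him : f '' Set.Icc 0 1 = A) (hab : f 0 = a ∧ f 1 = b) {t : ℝ}
    (ht : t ∈ Set.Ioo (0:ℝ) 1) : f t ∉ Endpoints X := by
  intro hend
  have hmem : f t ∈ A := him ▸ Set.mem_image_of_mem f ⟨le_of_lt ht.1, le_of_lt ht.2⟩
  obtain ⟨b', hb'⟩ := hend.2 A hA ⟨a, b, f, hc, hi, him, hab.1, hab.2⟩ hmem
  have h1 := myArc.preconn_diff_left hb'
  have h2 := myArc.not_preconn_diff_mid hc hi ht
  rw [him] at h2
  exact h2 h1

/-- every non-endpoint lies strictly inside an arc contained in `X \ Endpoints X` -/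
lemma my_mem_diff_endpoints {X : Set α} (hX : IsDendroid X) {x : α}
    (hx : x ∈ X \ Endpoints X) :
    ∃ A a b, A ⊆ X \ Endpoints X ∧ IsArcWithEndpoints A a b ∧ x ∈ A ∧ x ≠ a ∧ x ≠ b := by
  obtain ⟨hxX, hxE⟩ := hx
  have : ∃ A, A ⊆ X ∧ IsArc A ∧ x ∈ A ∧ ¬∃ b, IsArcWithEndpoints A x b := by
    by_contra hcon
    push_neg at hcon
    exact hxE ⟨hxX, fun A hAX hA hxA => hcon A hAX hA hxA⟩
  obtain ⟨A, hAX, ⟨a0, b0, f, hc, hi, him, h0, h1⟩, hxA, hno⟩ := this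
  rw [← him] at hxA
  obtain ⟨t, htI, rfl⟩ := hxA
  have ht0 : t ≠ 0 := by
    rintro rfl
    exact hno ⟨b0, f, hc, hi, him, rfl, h1⟩
  have ht1 : t ≠ 1 := by
    rintro rfl
    exact hno ⟨a0, myArc.symm ⟨f, hc, hi, him, h0, rfl⟩⟩
  have ht : t ∈ Set.Ioo (0:ℝ) 1 :=
    ⟨lt_of_le_of_ne htI.1 (Ne.symm ht0), lt_of_le_of_ne htI.2 ht1⟩
  set q := t / 2 with hq
  set q' := (t + 1) / 2 with hq'
  have hq0 : 0 < q := by rw [hq]; linarith [ht.1]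
  have hqt : q < t := by rw [hq]; linarith [ht.1]
  have htq' : t < q' := by rw [hq']; linarith [ht.2]
  have hq'1 : q' < 1 := by rw [hq']; linarith [ht.2]
  have harc := myArc.subarc hc hi (le_of_lt hq0) (lt_trans hqt htq') (le_of_lt hq'1)
  refine ⟨f '' Set.Icc q q', f q, f q', ?_, harc, ⟨t, ⟨le_of_lt hqt, le_of_lt htq'⟩, rfl⟩,
    ?_, ?_⟩
  · rintro z ⟨s, hs, rfl⟩
    have hsIoo : s ∈ Set.Ioo (0:ℝ) 1 := ⟨lt_of_lt_of_le hq0 hs.1, lt_of_le_of_lt hs.2 hq'1⟩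
    have hsA : f s ∈ A := by
      rw [← him]; exact Set.mem_image_of_mem f ⟨le_of_lt hsIoo.1, le_of_lt hsIoo.2⟩
    exact ⟨hAX hsA, myArc.interior_not_endpoint hAX hc hi him ⟨h0, h1⟩ hsIoo⟩
  · intro he
    have := hi ⟨le_of_lt ht.1, le_of_lt ht.2⟩
      ⟨le_of_lt hq0, by linarith⟩ he
    linarith
  · intro he
    have := hi ⟨le_of_lt ht.1, le_of_lt ht.2⟩
      ⟨by linarith, le_of_lt hq'1⟩ he
    linarith

/-- the relation "joined by an arc inside `X \ Endpoints X`" -/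
def myRel (X : Set α) (x y : α) : Prop :=
  x = y ∨ ∃ A, A ⊆ X \ Endpoints X ∧ IsArcWithEndpoints A x y

lemma myRel.refl {X : Set α} (x : α) : myRel X x x := Or.inl rfl

lemma myRel.symm {X : Set α} {x y : α} (h : myRel X x y) : myRel X y x := by
  rcases h with rfl | ⟨A, hA, harc⟩
  · exact Or.inl rfl
  · exact Or.inr ⟨A, hA, myArc.symm harc⟩

lemma myRel.mem {X : Set α} {x y : α} (hx : x ∈ X \ Endpoints X) (h : myRel X x y) :
    y ∈ X \ Endpoints X := by
  rcases h with rfl | ⟨A, hA, harc⟩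
  · exact hx
  · exact hA (myArc.right_mem harc)

lemma myRel.trans {X : Set α} (hX : IsDendroid X) {x y z : α}
    (hx : x ∈ X \ Endpoints X) (h1 : myRel X x y) (h2 : myRel X y z) : myRel X x z := by
  rcases h1 with rfl | ⟨A, hA, hAarc⟩
  · exact h2
  rcases h2 with rfl | ⟨B, hB, hBarc⟩
  · exact Or.inr ⟨A, hA, hAarc⟩
  rcases eq_or_ne x z with rfl | hxz
  · exact Or.inl rfl
  have hzX : z ∈ X := (hB (myArc.right_mem hBarc)).1
  obtain ⟨C, hCX, hCarc⟩ := hX.2.2.2 x hx.1 z hzX hxz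
  have hUconn : IsConnected (A ∪ B) :=
    IsConnected.union ⟨y, myArc.right_mem hAarc, myArc.left_mem hBarc⟩
      (myArc.connected hAarc) (myArc.connected hBarc)
  have hUcomp : IsCompact (A ∪ B) := (myArc.compact hAarc).union (myArc.compact hBarc)
  have hUX : A ∪ B ⊆ X := Set.union_subset (hA.trans Set.diff_subset)
    (hB.trans Set.diff_subset)
  have hCsub : C ⊆ A ∪ B := myArc.subset_subcont hX hCX hCarc hUX hUcomp hUconn
    (Or.inl (myArc.left_mem hAarc)) (Or.inr (myArc.right_mem hBarc))
  exact Or.inr ⟨C, hCsub.trans (Set.union_subset hA hB), hCarc⟩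

/-- all points of an arc inside `X \ Endpoints X` are related to any of its points -/
lemma myArc.subset_class {X A : Set α} {a b x : α} (hA : A ⊆ X \ Endpoints X)
    (h : IsArcWithEndpoints A a b) (hx : x ∈ A) : ∀ z ∈ A, myRel X x z := by
  obtain ⟨f, hc, hi, him, h0, h1⟩ := h
  rw [← him] at hx
  obtain ⟨t, ht, rfl⟩ := hx
  intro z hz
  rw [← him] at hz
  obtain ⟨s, hs, rfl⟩ := hz
  rcases lt_trichotomy t s with hts | hts | hts
  · have harc := myArc.subarc hc hi ht.1 hts hs.2
    exact Or.inr ⟨f '' Set.Icc t s, (Set.image_mono (f := f) (Set.Icc_subset_Icc ht.1 hs.2)).trans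
      (him ▸ hA), harc⟩
  · rw [hts]; exact Or.inl rfl
  · have harc := myArc.subarc hc hi hs.1 hts ht.2
    exact Or.inr ⟨f '' Set.Icc s t, (Set.image_mono (f := f) (Set.Icc_subset_Icc hs.1 ht.2)).trans
      (him ▸ hA), myArc.symm harc⟩

/-- the arc component of `x` in `X \ Endpoints X` -/
def myCls (X : Set α) (x : α) : Set α := {y | myRel X x y}

/-- Main covering lemma: the arc component of `q₀` in `X \ Endpoints X` is a countable
union of arcs. -/
lemma my_class_cover {X : Set α} (hX : IsDendroid X) (hSus : IsSuslinian X) {q₀ : α}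
    (hq : q₀ ∈ X \ Endpoints X) :
    ∃ S : Set (Set α), S.Countable ∧ (∀ A ∈ S, IsArc A ∧ A ⊆ myCls X q₀) ∧
      ⋃₀ S = myCls X q₀ := by
  classical
  set Q := myCls X q₀ with hQdef
  have hQmem : ∀ y, y ∈ Q ↔ myRel X q₀ y := fun y => Iff.rfl
  have hQsub : Q ⊆ X \ Endpoints X := fun y hy => myRel.mem hq hy
  have hQX : Q ⊆ X := hQsub.trans Set.diff_subset
  have hq₀Q : q₀ ∈ Q := myRel.refl q₀
  have hsegQ : ∀ z ∈ Q, mySeg X q₀ z ⊆ Q := by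
    intro z hz
    rcases eq_or_ne z q₀ with rfl | hne
    · rw [mySeg.self hq.1]
      intro w hw
      rw [Set.mem_singleton_iff] at hw
      subst hw
      exact hq₀Q
    · rcases hz with h | ⟨A, hA, harc⟩
      · exact absurd h.symm hne
      · rw [mySeg.eq_arc hX (hA.trans Set.diff_subset) harc]
        intro w hw
        exact myArc.subset_class hA harc (myArc.left_mem harc) w hw
  set Pfam : Set (Set (Set α)) := {G | (∀ A ∈ G, IsArc A ∧ A ⊆ Q) ∧ G.PairwiseDisjoint id}
    with hPdef
  obtain ⟨G, hGmax⟩ : ∃ G, Maximal (· ∈ Pfam) G := by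
    apply zorn_subset
    intro c hc hchain
    refine ⟨⋃₀ c, ⟨?_, ?_⟩, fun s hs => Set.subset_sUnion_of_mem hs⟩
    · rintro A ⟨G, hGc, hAG⟩
      exact (hc hGc).1 A hAG
    · intro A hA B hB hAB
      obtain ⟨G1, hG1, hAG1⟩ := hA
      obtain ⟨G2, hG2, hBG2⟩ := hB
      rcases hchain.total hG1 hG2 with h | h
      · exact (hc hG2).2 (h hAG1) hBG2 hAB
      · exact (hc hG1).2 hAG1 (h hBG2) hAB
  have hGarc : ∀ A ∈ G, IsArc A ∧ A ⊆ Q := hGmax.1.1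
  have hGcnt : G.Countable := by
    refine hSus G ?_ hGmax.1.2
    intro A hA
    obtain ⟨⟨a, b, harc⟩, hAQ⟩ := hGarc A hA
    exact ⟨hAQ.trans hQX, myArc.compact harc, myArc.connected harc, myArc.nontrivial harc⟩
  have hGne : ∀ A ∈ G, A.Nonempty := by
    intro A hA
    obtain ⟨⟨a, b, harc⟩, _⟩ := hGarc A hA
    exact myArc.nonempty harc
  let pt : Set α → α := fun D => if h : D.Nonempty then h.some else q₀
  have hpt : ∀ D ∈ G, pt D ∈ D := by
    intro D hD
    simp only [pt]
    rw [dif_pos (hGne D hD)]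
    exact (hGne D hD).some_mem
  set S := G ∪ ((fun D => mySeg X q₀ (pt D)) '' {D ∈ G | pt D ≠ q₀}) with hSdef
  have hSQ : ∀ A ∈ S, IsArc A ∧ A ⊆ Q := by
    rintro A (hA | ⟨D, ⟨hDG, hne⟩, rfl⟩)
    · exact hGarc A hA
    · have hptQ : pt D ∈ Q := (hGarc D hDG).2 (hpt D hDG)
      obtain ⟨h1, h2⟩ := mySeg.arc hX hq.1 (hQX hptQ) (Ne.symm hne)
      exact ⟨⟨q₀, pt D, h2⟩, hsegQ (pt D) hptQ⟩
  refine ⟨S, ?_, hSQ, ?_⟩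
  · exact hGcnt.union ((hGcnt.mono (Set.sep_subset _ _)).image _)
  apply Set.Subset.antisymm
  · exact Set.sUnion_subset fun A hA => (hSQ A hA).2
  -- the hard inclusion
  intro y hy
  obtain ⟨A, a, b, hAsub, hAarc, hyA, hya, hyb⟩ := my_mem_diff_endpoints hX (hQsub hy)
  have hAQ : A ⊆ Q := by
    intro z hz
    exact myRel.trans hX hq hy (myArc.subset_class hAsub hAarc hyA z hz)
  have haQ : a ∈ Q := hAQ (myArc.left_mem hAarc)
  have hbQ : b ∈ Q := hAQ (myArc.right_mem hAarc)
  obtain ⟨hWa1, hWa2, hWa3⟩ := mySeg.subcont hX hq.1 (hQX haQ)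
  obtain ⟨hWb1, hWb2, hWb3⟩ := mySeg.subcont hX hq.1 (hQX hbQ)
  have hWconn : IsConnected (mySeg X q₀ a ∪ mySeg X q₀ b) :=
    IsConnected.union ⟨q₀, mySeg.mem_left, mySeg.mem_left⟩ hWa3 hWb3
  have hyW : y ∈ mySeg X q₀ a ∪ mySeg X q₀ b :=
    myArc.subset_subcont hX (hAsub.trans Set.diff_subset) hAarc
      (Set.union_subset hWa1 hWb1) (hWa2.union hWb2) hWconn
      (Or.inl mySeg.mem_right) (Or.inr mySeg.mem_right) hyA
  obtain ⟨z, hzQ, hyz, hyseg⟩ : ∃ z, z ∈ Q ∧ y ≠ z ∧ y ∈ mySeg X q₀ z := by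
    rcases hyW with h | h
    · exact ⟨a, haQ, hya, h⟩
    · exact ⟨b, hbQ, hyb, h⟩
  have hzq₀ : z ≠ q₀ := by
    rintro rfl
    rw [mySeg.self hq.1] at hyseg
    exact hyz (by simpa using hyseg)
  obtain ⟨hBX, hBarc⟩ := mySeg.arc hX hq.1 (hQX hzQ) (Ne.symm hzq₀)
  have hBQ : mySeg X q₀ z ⊆ Q := hsegQ z hzQ
  obtain ⟨g, hgc, hgi, hgim, hg0, hg1⟩ := hBarc
  rw [← hgim] at hyseg
  obtain ⟨r, hr, hgr⟩ := hyseg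
  have hr1 : r < 1 := by
    rcases lt_or_eq_of_le hr.2 with h | h
    · exact h
    · exact absurd (by rw [← hgr, h, hg1]) hyz
  have hCarc := myArc.subarc hgc hgi hr.1 hr1 le_rfl
  rw [hg1] at hCarc
  have hCsub : g '' Set.Icc r 1 ⊆ mySeg X q₀ z := by
    rw [← hgim]
    exact Set.image_mono (f := g) (Set.Icc_subset_Icc hr.1 le_rfl)
  have hCQ : g '' Set.Icc r 1 ⊆ Q := hCsub.trans hBQ
  obtain ⟨D, hDG, w, hwC, hwD⟩ : ∃ D ∈ G, ∃ w ∈ g '' Set.Icc r 1, w ∈ D := by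
    by_contra hcon
    push_neg at hcon
    have hdisj : ∀ D ∈ G, Disjoint (g '' Set.Icc r 1) D := by
      intro D hD
      rw [Set.disjoint_left]
      intro w hwC hwD
      exact hcon D hD w hwC hwD
    have hCG : insert (g '' Set.Icc r 1) G ∈ Pfam := by
      constructor
      · rintro A (rfl | hA)
        · exact ⟨⟨g r, z, hCarc⟩, hCQ⟩
        · exact hGarc A hA
      · exact hGmax.1.2.insert fun D hD _ => hdisj D hD
    have hsub := hGmax.2 hCG (Set.subset_insert _ _)
    have hCin : g '' Set.Icc r 1 ∈ G := hsub (Set.mem_insert _ _)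
    have hde := hdisj _ hCin
    rw [disjoint_self] at hde
    have hmem : g r ∈ g '' Set.Icc r 1 := ⟨r, ⟨le_rfl, le_of_lt hr1⟩, rfl⟩
    rw [hde] at hmem
    exact hmem
  obtain ⟨r', hr', hgr'⟩ := hwC
  have h0r' : (0:ℝ) ≤ r' := le_trans hr.1 hr'.1
  have hywseg : y ∈ mySeg X q₀ w := by
    rcases lt_or_eq_of_le h0r' with hpos | he
    · have harc' := myArc.subarc hgc hgi le_rfl hpos hr'.2
      rw [hg0, hgr'] at harc'
      have hsub' : g '' Set.Icc 0 r' ⊆ X := by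
        refine Set.Subset.trans (Set.image_mono (f := g) (Set.Icc_subset_Icc le_rfl hr'.2)) ?_
        rw [hgim]
        exact hBX
      rw [mySeg.eq_arc hX hsub' harc']
      exact ⟨r, ⟨hr.1, hr'.1⟩, hgr⟩
    · have hr0 : r = 0 := le_antisymm (by rw [he]; exact hr'.1) hr.1
      have : y = q₀ := by rw [← hgr, hr0, hg0]
      rw [this]
      exact mySeg.mem_left
  have hu := hpt D hDG
  obtain ⟨⟨a', b', hDarc⟩, hDQ⟩ := hGarc D hDG
  obtain ⟨hU1, hU2, hU3⟩ := mySeg.subcont hX hq.1 (hQX (hDQ hu))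
  have hKconn : IsConnected (mySeg X q₀ (pt D) ∪ D) :=
    IsConnected.union ⟨pt D, mySeg.mem_right, hu⟩ hU3 (myArc.connected hDarc)
  have hyK : y ∈ mySeg X q₀ (pt D) ∪ D := by
    refine mySeg.subset_of (Set.union_subset hU1 (hDQ.trans hQX))
      (hU2.union (myArc.compact hDarc)) hKconn (Or.inl mySeg.mem_left) (Or.inr hwD) hywseg
  rcases hyK with hyu | hyD
  · rcases eq_or_ne (pt D) q₀ with he | hne
    · rw [he, mySeg.self hq.1] at hyu
      have hyq : y = q₀ := by simpa using hyu
      exact ⟨D, Or.inl hDG, by rw [hyq, ← he]; exact hu⟩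
    · exact ⟨mySeg X q₀ (pt D), Or.inr ⟨D, ⟨hDG, hne⟩, rfl⟩, hyu⟩
  · exact ⟨D, Or.inl hDG, hyD⟩

end AuxProof

/-- Proposition 1, (1) ↔ (2). -/
theorem stmt_5 {α : Type*} [MetricSpace α] (X : Set α) (hX : IsDendroid X) :
    IsSuslinian X ↔
      ∃ S : Set (Set α), S.Countable ∧ (∀ A ∈ S, IsArc A) ∧
        X \ Endpoints X = ⋃₀ S := by
  constructor
  · -- Suslinian → countable union of arcs
    intro hSus
    classical
    obtain ⟨x₀, hx₀⟩ := hX.2.1.1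
    haveI : Nonempty α := ⟨x₀⟩
    have hcov : ∀ x ∈ X \ Endpoints X, ∃ S : Set (Set α), S.Countable ∧
        (∀ A ∈ S, IsArc A ∧ A ⊆ myCls X x) ∧ ⋃₀ S = myCls X x :=
      fun x hx => my_class_cover hX hSus hx
    choose! cov hcov1 hcov2 hcov3 using hcov
    have harc : ∀ x ∈ X \ Endpoints X, ∃ A, (∃ a b, IsArcWithEndpoints A a b) ∧
        A ⊆ myCls X x ∧ x ∈ A := by
      intro x hx
      obtain ⟨A, a, b, hAsub, hAarc, hxA, _, _⟩ := my_mem_diff_endpoints hX hx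
      exact ⟨A, ⟨a, b, hAarc⟩, fun z hz => myArc.subset_class hAsub hAarc hxA z hz, hxA⟩
    choose! arcOf harcOf1 harcOf2 harcOf3 using harc
    have hclsself : ∀ x ∈ X \ Endpoints X, x ∈ myCls X x := fun x _ => myRel.refl x
    have hclssub : ∀ x ∈ X \ Endpoints X, myCls X x ⊆ X \ Endpoints X :=
      fun x hx y hy => myRel.mem hx hy
    have hclseq : ∀ x ∈ X \ Endpoints X, ∀ y ∈ myCls X x, myCls X x = myCls X y := by
      intro x hx y hy
      have hyN : y ∈ X \ Endpoints X := myRel.mem hx hy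
      ext z
      constructor
      · intro hz
        exact myRel.trans hX hyN (myRel.symm hy) hz
      · intro hz
        exact myRel.trans hX hx hy hz
    have hclsdisj : ∀ x ∈ X \ Endpoints X, ∀ x' ∈ X \ Endpoints X,
        myCls X x ≠ myCls X x' → Disjoint (myCls X x) (myCls X x') := by
      intro x hx x' hx' hne
      rw [Set.disjoint_left]
      intro z hz hz'
      exact hne ((hclseq x hx z hz).trans (hclseq x' hx' z hz').symm)
    set Qfam := myCls X '' (X \ Endpoints X) with hQfam
    have hrep : ∀ Q ∈ Qfam, ∃ x ∈ X \ Endpoints X, myCls X x = Q := fun Q hQ => hQ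
    choose! rep hrep1 hrep2 using hrep
    have hQcnt : Qfam.Countable := by
      refine Set.MapsTo.countable_of_injOn
        (Set.mapsTo_image (fun Q => arcOf (rep Q)) Qfam) ?_ ?_
      · intro Q1 h1 Q2 h2 he
        have h1N := hrep1 Q1 h1
        have h2N := hrep1 Q2 h2
        by_contra hne
        have hdis : Disjoint Q1 Q2 := by
          rw [← hrep2 Q1 h1, ← hrep2 Q2 h2]
          refine hclsdisj _ h1N _ h2N ?_
          rw [hrep2 Q1 h1, hrep2 Q2 h2]
          exact hne
        have hx1 : rep Q1 ∈ arcOf (rep Q1) := harcOf3 _ h1N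
        have hsub1 := harcOf2 _ h1N
        rw [hrep2 Q1 h1] at hsub1
        have hsub2 := harcOf2 _ h2N
        rw [hrep2 Q2 h2] at hsub2
        have he' : arcOf (rep Q1) = arcOf (rep Q2) := he
        have hx2 : rep Q1 ∈ Q2 := by
          rw [he'] at hx1
          exact hsub2 hx1
        exact Set.disjoint_left.1 hdis (hsub1 (harcOf3 _ h1N)) hx2
      · refine hSus _ ?_ ?_
        · rintro A ⟨Q, hQ, rfl⟩
          have hN1 := hrep1 Q hQ
          obtain ⟨a, b, hab⟩ := harcOf1 _ hN1
          refine ⟨?_, myArc.compact hab, myArc.connected hab, myArc.nontrivial hab⟩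
          exact ((harcOf2 _ hN1).trans (hclssub _ hN1)).trans Set.diff_subset
        · rintro A ⟨Q1, h1, rfl⟩ B ⟨Q2, h2, rfl⟩ hne
          have h1N := hrep1 Q1 h1
          have h2N := hrep1 Q2 h2
          have hQne : Q1 ≠ Q2 := fun h => hne (by rw [h])
          have hdis : Disjoint Q1 Q2 := by
            rw [← hrep2 Q1 h1, ← hrep2 Q2 h2]
            refine hclsdisj _ h1N _ h2N ?_
            rw [hrep2 Q1 h1, hrep2 Q2 h2]
            exact hQne
          exact hdis.mono ((harcOf2 _ h1N).trans (hrep2 Q1 h1).subset)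
            ((harcOf2 _ h2N).trans (hrep2 Q2 h2).subset)
    refine ⟨⋃ Q ∈ Qfam, cov (rep Q), ?_, ?_, ?_⟩
    · exact hQcnt.biUnion fun Q hQ => hcov1 _ (hrep1 Q hQ)
    · intro A hA
      simp only [Set.mem_iUnion] at hA
      obtain ⟨Q, hQ, hA⟩ := hA
      exact (hcov2 _ (hrep1 Q hQ) A hA).1
    · apply Set.Subset.antisymm
      · intro x hx
        have hQ : myCls X x ∈ Qfam := ⟨x, hx, rfl⟩
        have hxcls : x ∈ myCls X (rep (myCls X x)) := by
          rw [hrep2 _ hQ]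
          exact hclsself x hx
        rw [← hcov3 _ (hrep1 _ hQ)] at hxcls
        obtain ⟨A, hA, hxA⟩ := hxcls
        exact ⟨A, Set.mem_iUnion.2 ⟨myCls X x, Set.mem_iUnion.2 ⟨hQ, hA⟩⟩, hxA⟩
      · rintro z ⟨A, hA, hzA⟩
        simp only [Set.mem_iUnion] at hA
        obtain ⟨Q, hQ, hA⟩ := hA
        exact hclssub _ (hrep1 Q hQ) ((hcov2 _ (hrep1 Q hQ) A hA).2 hzA)
  · -- countable union of arcs → Suslinian
    rintro ⟨S, hScnt, hSarc, hSeq⟩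
    intro F hF hFd
    classical
    have hXsub : ∀ A ∈ S, A ⊆ X := by
      intro A hA
      have h1 : A ⊆ ⋃₀ S := Set.subset_sUnion_of_mem hA
      rw [← hSeq] at h1
      exact h1.trans Set.diff_subset
    have hkey : ∀ K ∈ F, ∃ A ∈ S, ¬(K ∩ A).Countable := by
      intro K hK
      obtain ⟨hKX, hKc, hKconn, x, hxK, y, hyK, hxy⟩ := hF K hK
      obtain ⟨B, hBX, hBarc⟩ := hX.2.2.2 x (hKX hxK) y (hKX hyK) hxy
      have hBK : B ⊆ K := myArc.subset_subcont hX hBX hBarc hKX hKc hKconn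
        hxK hyK
      obtain ⟨f, hc, hi, him, h0, h1⟩ := hBarc
      have hIB : f '' Set.Ioo 0 1 ⊆ B := by
        rw [← him]
        exact Set.image_mono (f := f) Set.Ioo_subset_Icc_self
      have hIsub : f '' Set.Ioo 0 1 ⊆ X \ Endpoints X := by
        rintro z ⟨t, ht, rfl⟩
        have hmem : f t ∈ B := by
          rw [← him]
          exact Set.mem_image_of_mem f (Set.Ioo_subset_Icc_self ht)
        exact ⟨hBX hmem, myArc.interior_not_endpoint hBX hc hi him ⟨h0, h1⟩ ht⟩
      have hIK : f '' Set.Ioo 0 1 ⊆ K := hIB.trans hBK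
      have hIunc : ¬ (f '' Set.Ioo 0 1).Countable := by
        intro hcnt
        have hIoo : (Set.Ioo (0:ℝ) 1).Countable :=
          Set.MapsTo.countable_of_injOn (Set.mapsTo_image f _)
            (hi.mono Set.Ioo_subset_Icc_self) hcnt
        have hcard : Cardinal.mk (Set.Ioo (0:ℝ) 1) ≤ Cardinal.aleph0 :=
          Cardinal.mk_le_aleph0_iff.2 (Set.countable_coe_iff.2 hIoo)
        rw [Cardinal.mk_Ioo_real zero_lt_one] at hcard
        exact absurd hcard (not_le.2 Cardinal.aleph0_lt_continuum)
      by_contra hcon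
      push_neg at hcon
      apply hIunc
      have hcover : f '' Set.Ioo 0 1 ⊆ ⋃ A ∈ S, (K ∩ A) := by
        intro z hz
        have hzN : z ∈ ⋃₀ S := by
          rw [← hSeq]
          exact hIsub hz
        obtain ⟨A, hA, hzA⟩ := hzN
        exact Set.mem_biUnion hA ⟨hIK hz, hzA⟩
      exact Set.Countable.mono hcover (Set.Countable.biUnion hScnt hcon)
    have hFA : ∀ A ∈ S, {K | K ∈ F ∧ ¬(K ∩ A).Countable}.Countable := by
      intro A hA
      obtain ⟨a, b, f, hc, hi, him, h0, h1⟩ := hSarc A hA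
      have hAX : A ⊆ X := hXsub A hA
      have hrat : ∀ K ∈ {K | K ∈ F ∧ ¬(K ∩ A).Countable},
          ∃ q : ℚ, f q ∈ K := by
        intro K hK
        obtain ⟨hKF, hKA⟩ := hK
        obtain ⟨hKX, hKc, hKconn, hKnt⟩ := hF K hKF
        set T := Set.Icc (0:ℝ) 1 ∩ f ⁻¹' K with hT
        have hTsub : T ⊆ Set.Icc (0:ℝ) 1 := Set.inter_subset_left
        have himT : f '' T = A ∩ K := by rw [hT, Set.image_inter_preimage, him]
        have hpre : IsPreconnected T := by
          rw [← my_preconn_transfer hc hi hTsub, himT]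
          exact hX.2.2.1 A K hAX hKX (myArc.compact ⟨f, hc, hi, him, h0, h1⟩)
            (myArc.connected ⟨f, hc, hi, him, h0, h1⟩) hKc hKconn
        have hTunc : ¬ T.Countable := by
          intro hcnt
          apply hKA
          have himcnt : (A ∩ K).Countable := by
            rw [← himT]
            exact hcnt.image f
          rwa [Set.inter_comm] at himcnt
        have hTnt : ∃ t₁ ∈ T, ∃ t₂ ∈ T, t₁ < t₂ := by
          have hns : ¬ T.Subsingleton := fun h => hTunc h.countable
          rw [Set.not_subsingleton_iff] at hns
          obtain ⟨t₁, ht₁, t₂, ht₂, hne⟩ := hns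
          rcases lt_or_gt_of_ne hne with h | h
          · exact ⟨t₁, ht₁, t₂, ht₂, h⟩
          · exact ⟨t₂, ht₂, t₁, ht₁, h⟩
        obtain ⟨t₁, ht₁, t₂, ht₂, hlt⟩ := hTnt
        obtain ⟨q, hq1, hq2⟩ := exists_rat_btwn hlt
        have hqT : (q:ℝ) ∈ T := hpre.Icc_subset ht₁ ht₂ ⟨le_of_lt hq1, le_of_lt hq2⟩
        exact ⟨q, hqT.2⟩
      choose! qf hqf using hrat
      refine Set.MapsTo.countable_of_injOn (Set.mapsTo_univ qf _) ?_ Set.countable_univ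
      intro K1 h1 K2 h2 he
      by_contra hne
      have hd := hFd h1.1 h2.1 hne
      have hm1 := hqf K1 h1
      have hm2 := hqf K2 h2
      rw [he] at hm1
      exact Set.disjoint_left.1 hd hm1 hm2
    have hFsub : F ⊆ ⋃ A ∈ S, {K | K ∈ F ∧ ¬(K ∩ A).Countable} := by
      intro K hK
      obtain ⟨A, hA, hKA⟩ := hkey K hK
      exact Set.mem_biUnion hA ⟨hK, hKA⟩
    exact Set.Countable.mono hFsub (Set.Countable.biUnion hScnt hFA)
end

section
/- Let X be a dendroid such that X \ E(X) = ⋃ₙ αₙ is a countable union of arcs. Then there exists a countable set Q ⊂ X intersecting every arc of X; hence X is Suslinian. -/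
open Set Filter Topology

section AuxLemmas

variable {α : Type*} [MetricSpace α]

/-- Preimage of a preconnected subset of an arc under the parametrization. -/
lemma aux_preimage {g : ℝ → α} (hg : ContinuousOn g (Set.Icc 0 1))
    (hinj : Set.InjOn g (Set.Icc 0 1)) {C : Set α} (hC : C ⊆ g '' Set.Icc 0 1)
    (hconn : IsPreconnected C) :
    ∃ T : Set ℝ, T ⊆ Set.Icc 0 1 ∧ IsPreconnected T ∧ (∀ t ∈ T, g t ∈ C) ∧
      (∀ t ∈ Set.Icc (0:ℝ) 1, g t ∈ C → t ∈ T) := by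
  haveI : CompactSpace (Set.Icc (0:ℝ) 1) := isCompact_iff_compactSpace.mp isCompact_Icc
  set G : Set.Icc (0:ℝ) 1 → α := (Set.Icc (0:ℝ) 1).restrict g with hG
  have hGc : Continuous G := hg.restrict
  have hGi : Function.Injective G := fun a b hab => Subtype.ext (hinj a.2 b.2 hab)
  have hemb : Topology.IsInducing G :=
    (hGc.isClosedEmbedding hGi).toIsEmbedding.toIsInducing
  have hrangeG : Set.range G = g '' Set.Icc 0 1 := Set.range_restrict g _
  have himg : G '' (G ⁻¹' C) = C := by
    apply Set.image_preimage_eq_of_subset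
    rw [hrangeG]; exact hC
  have hP : IsPreconnected (G ⁻¹' C) := by
    rw [← hemb.isPreconnected_image, himg]; exact hconn
  refine ⟨Subtype.val '' (G ⁻¹' C), ?_, ?_, ?_, ?_⟩
  · rintro t ⟨p, _, rfl⟩; exact p.2
  · exact hP.image _ continuous_subtype_val.continuousOn
  · rintro t ⟨p, hp, rfl⟩; exact hp
  · intro t ht hgt; exact ⟨⟨t, ht⟩, hgt, rfl⟩

/-- An interior point of an arc is an endpoint of no parametrization of it. -/
lemma aux_not_endpoint {A : Set α} {f : ℝ → α} (hf : ContinuousOn f (Set.Icc 0 1))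
    (hinj : Set.InjOn f (Set.Icc 0 1)) (hA : f '' Set.Icc 0 1 = A) {t : ℝ}
    (ht : t ∈ Set.Ioo (0:ℝ) 1) : ¬ ∃ b, IsArcWithEndpoints A (f t) b := by
  rintro ⟨b, g, hg, hginj, hgA, hg0, hg1⟩
  have htI : t ∈ Set.Icc (0:ℝ) 1 := Set.Ioo_subset_Icc_self ht
  have h0I : (0:ℝ) ∈ Set.Icc (0:ℝ) 1 := by norm_num
  have h1I : (1:ℝ) ∈ Set.Icc (0:ℝ) 1 := by norm_num
  -- A \ {f t} is preconnected, being the image of (0,1] under g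
  have himg : g '' Set.Ioc 0 1 = A \ {f t} := by
    rw [← hgA, ← hg0]
    ext y
    constructor
    · rintro ⟨s, hs, rfl⟩
      refine ⟨⟨s, Set.Ioc_subset_Icc_self hs, rfl⟩, ?_⟩
      simp only [Set.mem_singleton_iff]
      intro h
      exact absurd (hginj (Set.Ioc_subset_Icc_self hs) h0I h) (ne_of_gt hs.1)
    · rintro ⟨⟨s, hs, rfl⟩, hne⟩
      refine ⟨s, ⟨?_, hs.2⟩, rfl⟩
      rcases lt_or_eq_of_le hs.1 with h | h
      · exact h
      · exact absurd (show g s ∈ {g 0} by rw [← h]; exact Set.mem_singleton _) hne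
  have hS : IsPreconnected (A \ {f t}) := by
    rw [← himg]
    exact isPreconnected_Ioc.image g (hg.mono Set.Ioc_subset_Icc_self)
  have hU : IsOpen ((f '' Set.Icc t 1)ᶜ) :=
    (isCompact_Icc.image_of_continuousOn
      (hf.mono (Set.Icc_subset_Icc ht.1.le le_rfl))).isClosed.isOpen_compl
  have hV : IsOpen ((f '' Set.Icc 0 t)ᶜ) :=
    (isCompact_Icc.image_of_continuousOn
      (hf.mono (Set.Icc_subset_Icc le_rfl ht.2.le))).isClosed.isOpen_compl
  have hcover : A \ {f t} ⊆ (f '' Set.Icc t 1)ᶜ ∪ (f '' Set.Icc 0 t)ᶜ := by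
    rintro y ⟨hyA, hyne⟩
    rw [← hA] at hyA
    obtain ⟨s, hs, rfl⟩ := hyA
    simp only [Set.mem_singleton_iff] at hyne
    simp only [Set.mem_union, Set.mem_compl_iff]
    rcases le_total s t with hst | hts
    · left
      intro hmem
      obtain ⟨s', hs', heq⟩ := hmem
      have h' := hinj ⟨ht.1.le.trans hs'.1, hs'.2⟩ hs heq
      subst h'
      exact hyne (by rw [le_antisymm hst hs'.1])
    · right
      intro hmem
      obtain ⟨s', hs', heq⟩ := hmem
      have h' := hinj ⟨hs'.1, hs'.2.trans ht.2.le⟩ hs heq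
      subst h'
      exact hyne (by rw [le_antisymm hs'.2 hts])
  have hf0S : f 0 ∈ A \ {f t} := by
    refine ⟨hA ▸ Set.mem_image_of_mem f h0I, ?_⟩
    simp only [Set.mem_singleton_iff]
    intro h
    exact absurd (hinj h0I htI h) (ne_of_lt ht.1)
  have hf1S : f 1 ∈ A \ {f t} := by
    refine ⟨hA ▸ Set.mem_image_of_mem f h1I, ?_⟩
    simp only [Set.mem_singleton_iff]
    intro h
    exact absurd (hinj h1I htI h) (ne_of_gt ht.2)
  have hf0U : f 0 ∈ (f '' Set.Icc t 1)ᶜ := by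
    simp only [Set.mem_compl_iff]
    intro hmem
    obtain ⟨s', hs', heq⟩ := hmem
    have h' := hinj ⟨ht.1.le.trans hs'.1, hs'.2⟩ h0I heq
    rw [h'] at hs'
    exact absurd hs'.1 (not_le.mpr ht.1)
  have hf1V : f 1 ∈ (f '' Set.Icc 0 t)ᶜ := by
    simp only [Set.mem_compl_iff]
    intro hmem
    obtain ⟨s', hs', heq⟩ := hmem
    have h' := hinj ⟨hs'.1, hs'.2.trans ht.2.le⟩ h1I heq
    rw [h'] at hs'
    exact absurd hs'.2 (not_le.mpr ht.2)
  obtain ⟨y, hyS, hyU, hyV⟩ :=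
    hS _ _ hU hV hcover ⟨f 0, hf0S, hf0U⟩ ⟨f 1, hf1S, hf1V⟩
  have hyA : y ∈ f '' Set.Icc 0 1 := by rw [hA]; exact hyS.1
  obtain ⟨s, hs, rfl⟩ := hyA
  rcases le_total s t with hst | hts
  · exact hyV (Set.mem_image_of_mem f ⟨hs.1, hst⟩)
  · exact hyU (Set.mem_image_of_mem f ⟨hts, hs.2⟩)

end AuxLemmas

/-- Proposition 1, (2) ⇒ (1). -/
theorem stmt_8 {α : Type*} [MetricSpace α] (X : Set α) (hX : IsDendroid X)
    (S : Set (Set α)) (hSc : S.Countable) (hSarcs : ∀ A ∈ S, IsArc A)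
    (hSunion : X \ Endpoints X = ⋃₀ S) :
    (∃ Q : Set α, Q.Countable ∧ Q ⊆ X ∧
        ∀ A : Set α, A ⊆ X → IsArc A → (Q ∩ A).Nonempty) ∧
      IsSuslinian X := by
  classical
  obtain ⟨hXcomp, hXconn, hHU, hArc⟩ := hX
  haveI := hSc.to_subtype
  have hparam : ∀ B : ↥S, ∃ g : ℝ → α, ContinuousOn g (Set.Icc 0 1) ∧
      Set.InjOn g (Set.Icc 0 1) ∧ g '' Set.Icc 0 1 = (B : Set α) := by
    rintro ⟨B, hB⟩
    obtain ⟨a, b, g, h1, h2, h3, -, -⟩ := hSarcs B hB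
    exact ⟨g, h1, h2, h3⟩
  choose gp hgc hgi hgA using hparam
  set Q : Set α :=
    ⋃ B : ↥S, gp B '' ((fun q : ℚ => (q : ℝ)) '' Set.univ ∩ Set.Icc 0 1) with hQdef
  have hQc : Q.Countable := by
    refine Set.countable_iUnion fun B => ?_
    exact ((Set.countable_univ.image _).mono Set.inter_subset_left).image _
  have hUS : ⋃₀ S ⊆ X := by rw [← hSunion]; exact Set.diff_subset
  have hQX : Q ⊆ X := by
    refine Set.iUnion_subset fun B => ?_
    rintro _ ⟨r, hr, rfl⟩
    exact hUS (Set.subset_sUnion_of_mem B.2 (hgA B ▸ Set.mem_image_of_mem _ hr.2))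
  have hhits : ∀ A : Set α, A ⊆ X → IsArc A → (Q ∩ A).Nonempty := by
    intro A hAX hAarc
    obtain ⟨a, b, f, hfc, hfi, hfA, hf0, hf1⟩ := hAarc
    have hsub01 : Set.Icc (1/4 : ℝ) (3/4) ⊆ Set.Icc 0 1 :=
      Set.Icc_subset_Icc (by norm_num) (by norm_num)
    set K : Set α := f '' Set.Icc (1/4) (3/4) with hKdef
    have hKsub : K ⊆ ⋃₀ S := by
      rintro _ ⟨s, hs, rfl⟩
      rw [← hSunion]
      refine ⟨hAX (hfA ▸ Set.mem_image_of_mem f (hsub01 hs)), ?_⟩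
      intro hend
      have hsIoo : s ∈ Set.Ioo (0:ℝ) 1 :=
        ⟨lt_of_lt_of_le (by norm_num) hs.1, lt_of_le_of_lt hs.2 (by norm_num)⟩
      exact aux_not_endpoint hfc hfi hfA hsIoo
        (hend.2 A hAX ⟨a, b, f, hfc, hfi, hfA, hf0, hf1⟩
          (hfA ▸ Set.mem_image_of_mem f (hsub01 hs)))
    have hKcomp : IsCompact K := isCompact_Icc.image_of_continuousOn (hfc.mono hsub01)
    haveI : CompactSpace ↥K := isCompact_iff_compactSpace.mp hKcomp
    have hKne : K.Nonempty := ⟨f (1/2), ⟨1/2, by norm_num, rfl⟩⟩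
    haveI : Nonempty ↥K := hKne.to_subtype
    have hFclosed : ∀ B : ↥S, IsClosed (Subtype.val ⁻¹' (B : Set α) : Set ↥K) := by
      intro B
      have hBc : IsCompact (B : Set α) := by
        rw [← hgA B]; exact isCompact_Icc.image_of_continuousOn (hgc B)
      exact hBc.isClosed.preimage continuous_subtype_val
    have hFunion : ⋃ B : ↥S, (Subtype.val ⁻¹' (B : Set α) : Set ↥K) = Set.univ := by
      ext k
      simp only [Set.mem_iUnion, Set.mem_univ, iff_true]
      obtain ⟨B, hB, hkB⟩ := hKsub k.2
      exact ⟨⟨B, hB⟩, hkB⟩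
    obtain ⟨B, hBint⟩ := nonempty_interior_of_iUnion_of_closed hFclosed hFunion
    obtain ⟨k, hk⟩ := hBint
    have hk' : (Subtype.val ⁻¹' (B : Set α) : Set ↥K) ∈ nhds k :=
      mem_interior_iff_mem_nhds.mp hk
    rw [mem_nhds_subtype] at hk'
    obtain ⟨u, hu, husub⟩ := hk'
    obtain ⟨s, hs, hfs⟩ := k.2
    rw [← hfs] at hu
    have hs01 : s ∈ Set.Icc (0:ℝ) 1 := hsub01 hs
    have hpre : f ⁻¹' u ∈ nhdsWithin s (Set.Icc 0 1) :=
      (hfc s hs01).preimage_mem_nhdsWithin hu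
    rw [Metric.mem_nhdsWithin_iff] at hpre
    obtain ⟨ε, hε, hεsub⟩ := hpre
    set s₁ := max (1/4 : ℝ) (s - ε/2) with hs₁def
    set s₂ := min (3/4 : ℝ) (s + ε/2) with hs₂def
    have hlt : s₁ < s₂ := by
      rw [hs₁def, hs₂def, max_lt_iff, lt_min_iff, lt_min_iff]
      exact ⟨⟨by norm_num, by linarith [hs.1]⟩, by linarith [hs.2], by linarith⟩
    have h12sub : Set.Icc s₁ s₂ ⊆ Set.Icc (1/4 : ℝ) (3/4) :=
      Set.Icc_subset_Icc (le_max_left _ _) (min_le_left _ _)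
    have hballsub : Set.Icc s₁ s₂ ⊆ Metric.ball s ε := by
      intro r hr
      rw [Metric.mem_ball, Real.dist_eq, abs_sub_lt_iff]
      have h1 : s - ε/2 ≤ s₁ := le_max_right _ _
      have h2 : s₂ ≤ s + ε/2 := min_le_right _ _
      constructor <;> linarith [hr.1, hr.2]
    have hCB : f '' Set.Icc s₁ s₂ ⊆ (B : Set α) := by
      rintro _ ⟨r, hrI, rfl⟩
      have hrK : f r ∈ K := Set.mem_image_of_mem f (h12sub hrI)
      have hru : f r ∈ u := hεsub ⟨hballsub hrI, hsub01 (h12sub hrI)⟩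
      exact husub (show (⟨f r, hrK⟩ : ↥K) ∈ Subtype.val ⁻¹' u from hru)
    have hCconn : IsPreconnected (f '' Set.Icc s₁ s₂) :=
      isPreconnected_Icc.image f (hfc.mono (h12sub.trans hsub01))
    have hCsub : f '' Set.Icc s₁ s₂ ⊆ gp B '' Set.Icc 0 1 := by rw [hgA B]; exact hCB
    obtain ⟨T, hTsub, hTconn, hTC, hTmem⟩ := aux_preimage (hgc B) (hgi B) hCsub hCconn
    have hs₁I : s₁ ∈ Set.Icc s₁ s₂ := Set.left_mem_Icc.mpr hlt.le
    have hs₂I : s₂ ∈ Set.Icc s₁ s₂ := Set.right_mem_Icc.mpr hlt.le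
    have hne : f s₁ ≠ f s₂ := fun h =>
      absurd (hfi (hsub01 (h12sub hs₁I)) (hsub01 (h12sub hs₂I)) h) hlt.ne
    obtain ⟨t₁, ht₁, hgt₁⟩ := hCsub (Set.mem_image_of_mem f hs₁I)
    obtain ⟨t₂, ht₂, hgt₂⟩ := hCsub (Set.mem_image_of_mem f hs₂I)
    have ht₁T : t₁ ∈ T := hTmem t₁ ht₁ (by rw [hgt₁]; exact Set.mem_image_of_mem f hs₁I)
    have ht₂T : t₂ ∈ T := hTmem t₂ ht₂ (by rw [hgt₂]; exact Set.mem_image_of_mem f hs₂I)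
    have htne : t₁ ≠ t₂ := fun h => hne (by rw [← hgt₁, ← hgt₂, h])
    obtain ⟨q, hq1, hq2⟩ := exists_rat_btwn (min_lt_max.mpr htne)
    have hqT : (q : ℝ) ∈ T := by
      refine hTconn.Icc_subset ?_ ?_ ⟨hq1.le, hq2.le⟩
      · rcases min_choice t₁ t₂ with h | h <;> rw [h] <;> assumption
      · rcases max_choice t₁ t₂ with h | h <;> rw [h] <;> assumption
    have hgqC : gp B (q : ℝ) ∈ f '' Set.Icc s₁ s₂ := hTC _ hqT
    have hCA : f '' Set.Icc s₁ s₂ ⊆ A := by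
      rw [← hfA]; exact Set.image_mono (h12sub.trans hsub01)
    refine ⟨gp B (q : ℝ), ?_, hCA hgqC⟩
    exact Set.mem_iUnion.mpr
      ⟨B, Set.mem_image_of_mem _ ⟨⟨q, Set.mem_univ _, rfl⟩, hTsub hqT⟩⟩
  refine ⟨⟨Q, hQc, hQX, hhits⟩, ?_⟩
  intro S' hS' hdisj
  have hpick : ∀ K ∈ S', ∃ q, q ∈ Q ∧ q ∈ K := by
    intro K hK
    obtain ⟨hKX, hKcomp, hKconn, hKnt⟩ := hS' K hK
    obtain ⟨x, hx, y, hy, hxy⟩ := hKnt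
    obtain ⟨A', hA'X, g, hgc', hgi', hgA', hg0, hg1⟩ := hArc x (hKX hx) y (hKX hy) hxy
    have hA'comp : IsCompact A' := by
      rw [← hgA']; exact isCompact_Icc.image_of_continuousOn hgc'
    have hA'conn : IsConnected A' := by
      rw [← hgA']
      exact ⟨⟨g 0, Set.mem_image_of_mem g (by norm_num)⟩,
        isPreconnected_Icc.image g hgc'⟩
    have hint : IsPreconnected (K ∩ A') := hHU K A' hKX hA'X hKcomp hKconn hA'comp hA'conn
    have hsubarc : K ∩ A' ⊆ g '' Set.Icc 0 1 := by rw [hgA']; exact Set.inter_subset_right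
    obtain ⟨T, hTsub, hTconn, hTC, hTmem⟩ := aux_preimage hgc' hgi' hsubarc hint
    have hxA' : x ∈ A' := by
      rw [← hg0, ← hgA']; exact Set.mem_image_of_mem g (by norm_num)
    have hyA' : y ∈ A' := by
      rw [← hg1, ← hgA']; exact Set.mem_image_of_mem g (by norm_num)
    have h0T : (0:ℝ) ∈ T := hTmem 0 (by norm_num) (by rw [hg0]; exact ⟨hx, hxA'⟩)
    have h1T : (1:ℝ) ∈ T := hTmem 1 (by norm_num) (by rw [hg1]; exact ⟨hy, hyA'⟩)
    have hIccT : Set.Icc (0:ℝ) 1 ⊆ T := hTconn.Icc_subset h0T h1T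
    have hA'K : A' ⊆ K := by
      rw [← hgA']
      rintro _ ⟨r, hr, rfl⟩
      exact (hTC r (hIccT hr)).1
    obtain ⟨q, hqQ, hqA'⟩ := hhits A' hA'X ⟨x, y, g, hgc', hgi', hgA', hg0, hg1⟩
    exact ⟨q, hqQ, hA'K hqA'⟩
  rcases Set.eq_empty_or_nonempty S' with rfl | ⟨K₀, hK₀⟩
  · exact Set.countable_empty
  obtain ⟨x₀, -, -, -, -⟩ := (hS' K₀ hK₀).2.2.2
  haveI : Nonempty α := ⟨x₀⟩
  choose! c hcQ hcK using hpick
  have hmaps : Set.MapsTo c S' Q := fun K hK => hcQ K hK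
  have hinj : Set.InjOn c S' := by
    intro K hK L hL hKL
    by_contra hne
    exact Set.disjoint_left.mp (hdisj hK hL hne) (hcK K hK) (hKL.symm ▸ hcK L hL)
  exact hmaps.countable_of_injOn hinj hQc
end

section
/- Let X be a plane dendroid. Then X is non-Suslinian if and only if X contains a Cantor set of arcs, i.e., a continuous collection of pairwise-disjoint arcs whose decomposition space is a Cantor set. -/
open Set Filter Topology

namespace Stmt9Aux

open TopologicalSpace Metric

abbrev CIP := C(unitInterval, Plane)

lemma isArc_of_cm (f : C(unitInterval, Plane)) (hinj : Function.Injective f) :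
    ∃ a b, IsArcWithEndpoints (Set.range f) a b := by
  have h0 : (0:ℝ) ∈ Set.Icc (0:ℝ) 1 := by constructor <;> norm_num
  have h1 : (1:ℝ) ∈ Set.Icc (0:ℝ) 1 := by constructor <;> norm_num
  refine ⟨f ⟨0, h0⟩, f ⟨1, h1⟩,
    fun r => f (Set.projIcc 0 1 zero_le_one r), ?_, ?_, ?_, ?_, ?_⟩
  · exact (f.continuous.comp continuous_projIcc).continuousOn
  · intro s hs t ht h
    simp only [Set.projIcc_of_mem zero_le_one hs, Set.projIcc_of_mem zero_le_one ht] at h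
    simpa using congrArg Subtype.val (hinj h)
  · apply Set.Subset.antisymm
    · exact fun x ⟨r, _, hr⟩ => ⟨_, hr⟩
    · rintro x ⟨s, rfl⟩
      exact ⟨(s : ℝ), s.2, by simp only [Set.projIcc_val zero_le_one s]⟩
  · simp only [Set.projIcc_of_mem zero_le_one h0]
  · simp only [Set.projIcc_of_mem zero_le_one h1]

lemma uncountable_cantor : Uncountable (ℕ → Bool) := by
  rw [uncountable_iff_forall_not_surjective]
  intro f hf
  obtain ⟨n, hn⟩ := hf (fun n => !(f n n))
  have := congrFun hn n
  simp at this

lemma uncountable_pigeonhole {β : Type*} {A : Set β} (hA : ¬ A.Countable)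
    {P : β → ℕ → Prop} (h : ∀ f ∈ A, ∃ n, P f n) :
    ∃ n, ¬ {f ∈ A | P f n}.Countable := by
  by_contra hc
  push_neg at hc
  apply hA
  have : A ⊆ ⋃ n, {f ∈ A | P f n} := by
    intro f hf; obtain ⟨n, hn⟩ := h f hf; exact Set.mem_iUnion.2 ⟨n, hf, hn⟩
  exact (Set.countable_iUnion hc).mono this

lemma condensation {β : Type*} [TopologicalSpace β] [SecondCountableTopology β]
    {S : Set β} (hS : ¬ S.Countable) :
    ¬ {x ∈ S | ∀ U : Set β, IsOpen U → x ∈ U → ¬ (S ∩ U).Countable}.Countable := by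
  intro hc
  apply hS
  set Bad := ⋃ U ∈ {U ∈ countableBasis β | (S ∩ U).Countable}, S ∩ U with hBad
  have hBadC : Bad.Countable := by
    refine Set.Countable.biUnion ?_ (fun U hU => hU.2)
    exact (countable_countableBasis β).mono (Set.sep_subset _ _)
  have hsub : S ⊆ {x ∈ S | ∀ U : Set β, IsOpen U → x ∈ U → ¬ (S ∩ U).Countable} ∪ Bad := by
    intro x hx
    by_cases h : ∀ U : Set β, IsOpen U → x ∈ U → ¬ (S ∩ U).Countable
    · exact Or.inl ⟨hx, h⟩
    · push_neg at h
      obtain ⟨U, hUo, hxU, hUc⟩ := h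
      obtain ⟨V, hVb, hxV, hVU⟩ := (isBasis_countableBasis β).exists_subset_of_mem_open hxU hUo
      exact Or.inr (Set.mem_biUnion ⟨hVb, hUc.mono (Set.inter_subset_inter_right S hVU)⟩ ⟨hx, hxV⟩)
  exact (hc.union hBadC).mono hsub

lemma sep_scale (f : C(unitInterval, Plane)) (hinj : Function.Injective f)
    {δ : ℝ} (hδ : 0 < δ) : ∃ n : ℕ, ∀ s t : unitInterval, δ ≤ dist s t →
      1/(n+1) ≤ dist (f s) (f t) := by
  set D : unitInterval × unitInterval → ℝ := fun p => dist (f p.1) (f p.2) with hD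
  have hDc : Continuous D := continuous_dist.comp
    ((f.continuous.comp continuous_fst).prodMk (f.continuous.comp continuous_snd))
  set T := {p : unitInterval × unitInterval | δ ≤ dist p.1 p.2} with hT
  have hTc : IsClosed T := isClosed_le continuous_const (continuous_dist.comp
    (continuous_fst.prodMk continuous_snd))
  rcases T.eq_empty_or_nonempty with hTe | hTne
  · exact ⟨0, fun s t h => absurd (show (s,t) ∈ T from h) (by simp [hTe])⟩
  · obtain ⟨p₀, hp₀T, hp₀⟩ := hTc.isCompact.exists_isMinOn hTne hDc.continuousOn
    have hpos : (0:ℝ) < D p₀ := by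
      rw [hD]
      simp only [dist_pos]
      intro h
      have h1 : p₀.1 = p₀.2 := hinj h
      have h2 : δ ≤ dist p₀.1 p₀.2 := hp₀T
      rw [h1, dist_self] at h2
      linarith
    obtain ⟨n, hn⟩ := exists_nat_one_div_lt hpos
    refine ⟨n, fun s t h => ?_⟩
    have h2 : D p₀ ≤ D (s, t) := isMinOn_iff.mp hp₀ (s,t) h
    have h3 : 1/((n:ℝ)+1) < D p₀ := hn
    exact le_of_lt (lt_of_lt_of_le h3 h2)

lemma compact_gap {K L : Set Plane} (hK : IsCompact K) (hL : IsCompact L)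
    (hKne : K.Nonempty) (hLne : L.Nonempty) (hd : Disjoint K L) :
    ∃ ζ > 0, ∀ x ∈ K, ∀ y ∈ L, ζ ≤ dist x y := by
  obtain ⟨x₀, hx₀K, hx₀⟩ := hK.exists_isMinOn hKne (continuous_infDist_pt L).continuousOn
  have hpos : 0 < infDist x₀ L := by
    rw [← hL.isClosed.notMem_iff_infDist_pos hLne]
    exact fun h => (hd.ne_of_mem hx₀K h) rfl
  exact ⟨infDist x₀ L, hpos, fun x hx y hy => le_trans (hx₀ hx) (infDist_le_dist_of_mem hy)⟩

structure GoodFam (X : Set Plane) (A : Set CIP) : Prop where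
  sub : ∀ f ∈ A, Set.range f ⊆ X
  inj : ∀ f ∈ A, Function.Injective f
  dis : ∀ f ∈ A, ∀ g ∈ A, f ≠ g → Disjoint (Set.range f) (Set.range g)
  unc : ¬ A.Countable

lemma GoodFam.mono {X : Set Plane} {A B : Set CIP} (hA : GoodFam X A) (hBA : B ⊆ A)
    (hB : ¬ B.Countable) : GoodFam X B :=
  ⟨fun f hf => hA.sub f (hBA hf), fun f hf => hA.inj f (hBA hf),
   fun f hf g hg => hA.dis f (hBA hf) g (hBA hg), hB⟩

lemma step {X : Set Plane} {A : Set CIP} (hA : GoodFam X A) {δ ρ : ℝ}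
    (hδ : 0 < δ) (hρ : 0 < ρ) :
    ∃ (A₀ A₁ : Set CIP) (g₀ g₁ : CIP) (γ ζ : ℝ),
      A₀ ⊆ A ∧ A₁ ⊆ A ∧ GoodFam X A₀ ∧ GoodFam X A₁ ∧ g₀ ∈ A₀ ∧ g₁ ∈ A₁ ∧
      (∀ f ∈ A₀, dist f g₀ ≤ ρ) ∧ (∀ f ∈ A₁, dist f g₁ ≤ ρ) ∧
      0 < γ ∧ (∀ f ∈ A₀ ∪ A₁, ∀ s t : unitInterval, δ ≤ dist s t → γ ≤ dist (f s) (f t)) ∧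
      0 < ζ ∧ (∀ f ∈ A₀, ∀ g ∈ A₁, ∀ s t : unitInterval, ζ ≤ dist (f s) (g t)) := by
  -- refine by separation scale
  obtain ⟨n₀, hn₀⟩ := uncountable_pigeonhole hA.unc
    (P := fun f n => ∀ s t : unitInterval, δ ≤ dist s t → 1/(n+1) ≤ dist (f s) (f t))
    (fun f hf => sep_scale f (hA.inj f hf) hδ)
  set A' := {f ∈ A | ∀ s t : unitInterval, δ ≤ dist s t → 1/(n₀+1) ≤ dist (f s) (f t)} with hA'
  have hA'A : A' ⊆ A := Set.sep_subset _ _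
  have hA'g : GoodFam X A' := hA.mono hA'A hn₀
  -- two condensation points
  set Cd := {x ∈ A' | ∀ U : Set CIP, IsOpen U → x ∈ U → ¬ (A' ∩ U).Countable} with hCd
  have hCdunc : ¬ Cd.Countable := condensation hn₀
  have hCdnt : ∃ g₀ ∈ Cd, ∃ g₁ ∈ Cd, g₀ ≠ g₁ := by
    by_contra h
    push_neg at h
    apply hCdunc
    apply Set.Subsingleton.countable
    intro x hx y hy
    by_contra hxy
    exact hxy (h x hx y hy)
  obtain ⟨g₀, hg₀, g₁, hg₁, hne⟩ := hCdnt
  -- the gap between their ranges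
  have hgap := compact_gap (isCompact_range g₀.continuous) (isCompact_range g₁.continuous)
    (Set.range_nonempty _) (Set.range_nonempty _)
    (hA'g.dis g₀ hg₀.1 g₁ hg₁.1 hne)
  obtain ⟨gap, hgappos, hgap⟩ := hgap
  set t := min ρ (gap/4) with ht
  have htpos : 0 < t := lt_min hρ (by linarith)
  set A₀ := A' ∩ Metric.ball g₀ t with hA₀
  set A₁ := A' ∩ Metric.ball g₁ t with hA₁
  have hA₀unc : ¬ A₀.Countable := hg₀.2 _ Metric.isOpen_ball (Metric.mem_ball_self htpos)
  have hA₁unc : ¬ A₁.Countable := hg₁.2 _ Metric.isOpen_ball (Metric.mem_ball_self htpos)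
  refine ⟨A₀, A₁, g₀, g₁, 1/(n₀+1), gap/2,
    (Set.inter_subset_left).trans hA'A, (Set.inter_subset_left).trans hA'A,
    hA.mono ((Set.inter_subset_left).trans hA'A) hA₀unc,
    hA.mono ((Set.inter_subset_left).trans hA'A) hA₁unc,
    ⟨hg₀.1, Metric.mem_ball_self htpos⟩, ⟨hg₁.1, Metric.mem_ball_self htpos⟩,
    fun f hf => le_trans (le_of_lt hf.2) (min_le_left _ _),
    fun f hf => le_trans (le_of_lt hf.2) (min_le_left _ _),
    by positivity, ?_, by linarith, ?_⟩
  · rintro f (hf | hf) s u hd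
    · exact hf.1.2 s u hd
    · exact hf.1.2 s u hd
  · intro f hf g hg s u
    have h1 : gap ≤ dist (g₀ s) (g₁ u) := hgap _ ⟨s, rfl⟩ _ ⟨u, rfl⟩
    have h2 : dist (g₀ s) (f s) ≤ t := by
      rw [dist_comm]
      exact le_trans (ContinuousMap.dist_apply_le_dist s) (le_of_lt hf.2)
    have h3 : dist (g u) (g₁ u) ≤ t := le_trans (ContinuousMap.dist_apply_le_dist u) (le_of_lt hg.2)
    have h4 : dist (g₀ s) (g₁ u) ≤ dist (g₀ s) (f s) + dist (f s) (g u) + dist (g u) (g₁ u) :=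
      dist_triangle4 _ _ _ _
    have h5 : t ≤ gap/4 := min_le_right _ _
    linarith

structure ND (X : Set Plane) where
  A : Set CIP
  g : CIP
  good : GoodFam X A
  mem : g ∈ A

def Children (X : Set Plane) (n : ℕ) (p c0 c1 : ND X) : Prop :=
  c0.A ⊆ p.A ∧ c1.A ⊆ p.A ∧
  (∀ f ∈ c0.A, dist f c0.g ≤ (1/2)^(n+1)) ∧ (∀ f ∈ c1.A, dist f c1.g ≤ (1/2)^(n+1)) ∧
  (∃ γ > 0, ∀ f ∈ c0.A ∪ c1.A, ∀ s t : unitInterval,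
      ((1:ℝ)/2)^(n+1) ≤ dist s t → γ ≤ dist (f s) (f t)) ∧
  (∃ ζ > 0, ∀ f ∈ c0.A, ∀ g ∈ c1.A, ∀ s t : unitInterval, ζ ≤ dist (f s) (g t))

lemma children_exist (X : Set Plane) (p : ND X) (n : ℕ) :
    ∃ c : ND X × ND X, Children X n p c.1 c.2 := by
  obtain ⟨A₀, A₁, g₀, g₁, γ, ζ, h0A, h1A, h0g, h1g, h0m, h1m, h0b, h1b, hγ, hsep, hζ, hζsep⟩ :=
    step p.good (δ := (1/2)^(n+1)) (ρ := (1/2)^(n+1)) (by positivity) (by positivity)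
  exact ⟨(⟨A₀, g₀, h0g, h0m⟩, ⟨A₁, g₁, h1g, h1m⟩), h0A, h1A, h0b, h1b,
    ⟨γ, hγ, hsep⟩, ⟨ζ, hζ, hζsep⟩⟩

noncomputable def childPair (X : Set Plane) (p : ND X) (n : ℕ) : ND X × ND X :=
  (children_exist X p n).choose

lemma childPair_spec (X : Set Plane) (p : ND X) (n : ℕ) :
    Children X n p (childPair X p n).1 (childPair X p n).2 :=
  (children_exist X p n).choose_spec

noncomputable def node (X : Set Plane) (root : ND X) : List Bool → ND X
  | [] => root
  | b :: σ =>
      if b then (childPair X (node X root σ) σ.length).2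
      else (childPair X (node X root σ) σ.length).1

def pre (c : ℕ → Bool) : ℕ → List Bool
  | 0 => []
  | n+1 => c n :: pre c n

lemma pre_length (c : ℕ → Bool) (n : ℕ) : (pre c n).length = n := by
  induction n with
  | zero => rfl
  | succ n ih => simp [pre, ih]

lemma pre_eq (c d : ℕ → Bool) (n : ℕ) (h : ∀ i < n, c i = d i) : pre c n = pre d n := by
  induction n with
  | zero => rfl
  | succ n ih =>
      simp only [pre]
      rw [h n (Nat.lt_succ_self n), ih (fun i hi => h i (Nat.lt_succ_of_lt hi))]

section Branch

variable (X : Set Plane) (root : ND X)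

lemma node_child_sub (σ : List Bool) (b : Bool) :
    (node X root (b :: σ)).A ⊆ (node X root σ).A := by
  have h := childPair_spec X (node X root σ) σ.length
  cases b
  · simpa [node] using h.1
  · simpa [node] using h.2.1

lemma node_child_ball (σ : List Bool) (b : Bool) :
    ∀ f ∈ (node X root (b :: σ)).A,
      dist f (node X root (b :: σ)).g ≤ (1/2)^(σ.length + 1) := by
  have h := childPair_spec X (node X root σ) σ.length
  cases b
  · simpa [node] using h.2.2.1
  · simpa [node] using h.2.2.2.1

lemma node_child_sep (σ : List Bool) (b : Bool) :
    ∃ γ > 0, ∀ f ∈ (node X root (b :: σ)).A, ∀ s t : unitInterval,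
      ((1:ℝ)/2)^(σ.length+1) ≤ dist s t → γ ≤ dist (f s) (f t) := by
  obtain ⟨γ, hγ, hsep⟩ := (childPair_spec X (node X root σ) σ.length).2.2.2.2.1
  refine ⟨γ, hγ, fun f hf s t hst => hsep f ?_ s t hst⟩
  cases b
  · exact Or.inl (by simpa [node] using hf)
  · exact Or.inr (by simpa [node] using hf)

lemma node_split (σ : List Bool) :
    ∃ ζ > 0, ∀ f ∈ (node X root (false :: σ)).A, ∀ g ∈ (node X root (true :: σ)).A,
      ∀ s t : unitInterval, ζ ≤ dist (f s) (g t) := by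
  obtain ⟨ζ, hζ, hsep⟩ := (childPair_spec X (node X root σ) σ.length).2.2.2.2.2
  exact ⟨ζ, hζ, fun f hf g hg => hsep f (by simpa [node] using hf) g (by simpa [node] using hg)⟩

variable (hrootball : ∀ f ∈ root.A, dist f root.g ≤ 1)

lemma pre_sub (c : ℕ → Bool) : ∀ n m, n ≤ m →
    (node X root (pre c m)).A ⊆ (node X root (pre c n)).A := by
  intro n m h
  induction m with
  | zero => rw [Nat.le_zero.mp h]
  | succ m ih =>
      rcases Nat.le_succ_iff_eq_or_le.mp h with rfl | h'
      · rfl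
      · exact (node_child_sub X root (pre c m) (c m)).trans (ih h')

include hrootball in
lemma ball_at (c : ℕ → Bool) (n : ℕ) :
    ∀ f ∈ (node X root (pre c n)).A, dist f (node X root (pre c n)).g ≤ (1/2)^n := by
  cases n with
  | zero => exact hrootball
  | succ n =>
      have h := node_child_ball X root (pre c n) (c n)
      rwa [pre_length] at h

end Branch

section Limits

variable (X : Set Plane) (root : ND X)

noncomputable def Gseq (c : ℕ → Bool) (n : ℕ) : CIP := (node X root (pre c n)).g

lemma Gseq_mem (c : ℕ → Bool) (n : ℕ) : Gseq X root c n ∈ (node X root (pre c n)).A :=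
  (node X root (pre c n)).mem

lemma Gseq_mem_le (c : ℕ → Bool) {n m : ℕ} (h : n ≤ m) :
    Gseq X root c m ∈ (node X root (pre c n)).A :=
  pre_sub X root c n m h (Gseq_mem X root c m)

lemma Gseq_cauchy (hrootball : ∀ f ∈ root.A, dist f root.g ≤ 1) (c : ℕ → Bool) :
    CauchySeq (Gseq X root c) := by
  apply cauchySeq_of_le_geometric (1/2 : ℝ) 1 (by norm_num)
  intro n
  rw [one_mul, dist_comm]
  exact ball_at X root hrootball c n _ (Gseq_mem_le X root c (Nat.le_succ n))

noncomputable def limF (hrootball : ∀ f ∈ root.A, dist f root.g ≤ 1) (c : ℕ → Bool) : CIP :=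
  (cauchySeq_tendsto_of_complete (Gseq_cauchy X root hrootball c)).choose

variable (hrootball : ∀ f ∈ root.A, dist f root.g ≤ 1)

lemma limF_tendsto (c : ℕ → Bool) :
    Tendsto (Gseq X root c) atTop (𝓝 (limF X root hrootball c)) :=
  (cauchySeq_tendsto_of_complete (Gseq_cauchy X root hrootball c)).choose_spec

lemma limF_dist (c : ℕ → Bool) (n : ℕ) :
    dist (limF X root hrootball c) (Gseq X root c n) ≤ (1/2)^n := by
  apply le_of_tendsto ((limF_tendsto X root hrootball c).dist
    (tendsto_const_nhds (x := Gseq X root c n)))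
  filter_upwards [eventually_ge_atTop n] with m hm
  exact ball_at X root hrootball c n _ (Gseq_mem_le X root c hm)

lemma limF_eval (c : ℕ → Bool) (s : unitInterval) :
    Tendsto (fun m => Gseq X root c m s) atTop (𝓝 (limF X root hrootball c s)) :=
  ((continuous_eval_const s).tendsto _).comp (limF_tendsto X root hrootball c)

lemma limF_mem (hX : IsClosed X) (c : ℕ → Bool) (s : unitInterval) :
    limF X root hrootball c s ∈ X := by
  apply hX.mem_of_tendsto (limF_eval X root hrootball c s)
  filter_upwards with m
  exact (node X root (pre c m)).good.sub _ (Gseq_mem X root c m) (Set.mem_range_self s)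

lemma limF_inj (c : ℕ → Bool) : Function.Injective (limF X root hrootball c) := by
  intro s t h
  by_contra hst
  have hd : 0 < dist s t := dist_pos.2 hst
  obtain ⟨n, hn⟩ := exists_pow_lt_of_lt_one hd (by norm_num : (1/2 : ℝ) < 1)
  have hn' : ((1:ℝ)/2)^(n+1) ≤ dist s t :=
    le_of_lt (lt_of_le_of_lt (pow_le_pow_of_le_one (by norm_num) (by norm_num) (Nat.le_succ n)) hn)
  obtain ⟨γ, hγ, hsep⟩ := node_child_sep X root (pre c n) (c n)
  rw [pre_length] at hsep
  have hγle : γ ≤ dist (limF X root hrootball c s) (limF X root hrootball c t) := by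
    apply ge_of_tendsto ((limF_eval X root hrootball c s).dist (limF_eval X root hrootball c t))
    filter_upwards [eventually_ge_atTop (n+1)] with m hm
    exact hsep _ (Gseq_mem_le X root c hm) s t hn'
  rw [h, dist_self] at hγle
  linarith

lemma limF_split {c d : ℕ → Bool} (hcd : c ≠ d) :
    ∃ ζ > 0, ∀ s t : unitInterval,
      ζ ≤ dist (limF X root hrootball c s) (limF X root hrootball d t) := by
  have hex : ∃ i, c i ≠ d i := by
    by_contra h
    push_neg at h
    exact hcd (funext h)
  set n := Nat.find hex with hn
  have hneq : c n ≠ d n := Nat.find_spec hex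
  have heq : ∀ i < n, c i = d i := fun i hi => of_not_not (Nat.find_min hex hi)
  have hpre : pre c n = pre d n := pre_eq c d n heq
  -- helper to handle both orders
  have key : ∀ (a b : ℕ → Bool), a n = false → b n = true → pre a n = pre b n →
      (∀ i, node X root (pre a i) = node X root (pre a i)) →
      ∃ ζ > 0, ∀ s t : unitInterval,
        ζ ≤ dist (limF X root hrootball a s) (limF X root hrootball b t) := by
    intro a b ha hb hab _
    obtain ⟨ζ, hζ, hsep⟩ := node_split X root (pre a n)
    refine ⟨ζ, hζ, fun s t => ?_⟩
    apply ge_of_tendsto ((limF_eval X root hrootball a s).dist (limF_eval X root hrootball b t))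
    filter_upwards [eventually_ge_atTop (n+1)] with m hm
    have hma : Gseq X root a m ∈ (node X root (false :: pre a n)).A := by
      have := Gseq_mem_le X root a (show n+1 ≤ m from hm)
      rwa [show pre a (n+1) = a n :: pre a n from rfl, ha] at this
    have hmb : Gseq X root b m ∈ (node X root (true :: pre a n)).A := by
      have := Gseq_mem_le X root b (show n+1 ≤ m from hm)
      rwa [show pre b (n+1) = b n :: pre b n from rfl, hb, ← hab] at this
    exact hsep _ hma _ hmb s t
  rcases Bool.eq_false_or_eq_true (c n) with hc | hc
  · obtain ⟨ζ, hζ, hsep⟩ := key d c (by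
      rcases Bool.eq_false_or_eq_true (d n) with hd' | hd'
      · exact absurd (hc.trans hd'.symm) hneq
      · exact hd') hc hpre.symm (fun _ => rfl)
    exact ⟨ζ, hζ, fun s t => by rw [dist_comm]; exact hsep t s⟩
  · obtain ⟨ζ, hζ, hsep⟩ := key c d hc (by
      rcases Bool.eq_false_or_eq_true (d n) with hd' | hd'
      · exact hd'
      · exact absurd (hc.trans hd'.symm) hneq) hpre (fun _ => rfl)
    exact ⟨ζ, hζ, hsep⟩

lemma limF_close {c d : ℕ → Bool} (n : ℕ) (h : ∀ i < n, c i = d i) :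
    dist (limF X root hrootball c) (limF X root hrootball d) ≤ (1/2)^n * 2 := by
  have hpre : pre c n = pre d n := pre_eq c d n h
  have h1 := limF_dist X root hrootball c n
  have h2 := limF_dist X root hrootball d n
  have hG : Gseq X root c n = Gseq X root d n := by rw [Gseq, Gseq, hpre]
  calc dist (limF X root hrootball c) (limF X root hrootball d)
      ≤ dist (limF X root hrootball c) (Gseq X root c n) +
        dist (Gseq X root c n) (limF X root hrootball d) := dist_triangle _ _ _
    _ ≤ (1/2)^n + (1/2)^n := by
        have h2' : dist (Gseq X root c n) (limF X root hrootball d) ≤ (1/2)^n := by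
          rw [hG, dist_comm]
          exact h2
        exact add_le_add h1 h2'
    _ = (1/2)^n * 2 := by ring

end Limits

-- an arc inside a nondegenerate subcontinuum of a dendroid
lemma subcontinuum_arc {X K : Set Plane} (hX : IsDendroid X) (hKX : K ⊆ X)
    (hKc : IsCompact K) (hKconn : IsConnected K) (hKnt : K.Nontrivial) :
    ∃ g : CIP, Function.Injective g ∧ Set.range g ⊆ K := by
  obtain ⟨x, hxK, y, hyK, hxy⟩ := hKnt
  obtain ⟨A, hAX, f, hfc, hfinj, hfimg, hf0, hf1⟩ :=
    hX.2.2.2 x (hKX hxK) y (hKX hyK) hxy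
  have h0m : (0:ℝ) ∈ Set.Icc (0:ℝ) 1 := by constructor <;> norm_num
  have h1m : (1:ℝ) ∈ Set.Icc (0:ℝ) 1 := by constructor <;> norm_num
  -- the restricted map as a continuous map on the unit interval
  have hgc : Continuous fun t : unitInterval => f ↑t := by
    rw [show (fun t : unitInterval => f ↑t) = (Set.Icc (0:ℝ) 1).restrict f from rfl]
    exact hfc.restrict
  set g : CIP := ⟨fun t : unitInterval => f ↑t, hgc⟩ with hg
  have hginj : Function.Injective g := by
    intro s t h
    exact Subtype.ext (hfinj s.2 t.2 h)
  have hgrange : Set.range g = A := by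
    rw [← hfimg]
    exact (Set.image_eq_range f (Set.Icc 0 1)).symm
  refine ⟨g, hginj, ?_⟩
  -- show A ⊆ K using hereditary unicoherence
  have hAcomp : IsCompact A := hfimg ▸ isCompact_Icc.image_of_continuousOn hfc
  have hAconn : IsConnected A := by
    refine ⟨⟨x, ?_⟩, hfimg ▸ isPreconnected_Icc.image f hfc⟩
    rw [← hfimg]; exact ⟨0, h0m, hf0⟩
  have hint : IsPreconnected (A ∩ K) := hX.2.2.1 A K hAX hKX hAcomp hAconn hKc hKconn
  -- homeomorphism from the unit interval onto A
  have hbij : Function.Bijective (fun t : unitInterval => (⟨g t, by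
      rw [← hgrange]; exact Set.mem_range_self t⟩ : ↥A)) := by
    constructor
    · intro s t h
      exact hginj (congrArg Subtype.val h)
    · rintro ⟨a, ha⟩
      rw [← hgrange] at ha
      obtain ⟨t, ht⟩ := ha
      exact ⟨t, Subtype.ext ht⟩
  set e : unitInterval ≃ ↥A := Equiv.ofBijective _ hbij with he
  have hec : Continuous e := Continuous.subtype_mk hgc _
  set H : unitInterval ≃ₜ ↥A := Continuous.homeoOfEquivCompactToT2 hec with hH
  set S' : Set ↥A := Subtype.val ⁻¹' K with hS'
  have hS'pc : IsPreconnected S' := by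
    rw [← IsInducing.subtypeVal.isPreconnected_image, hS', Subtype.image_preimage_coe]
    exact hint
  have hpre : IsPreconnected (H.symm '' S') := hS'pc.image _ H.symm.continuous.continuousOn
  set T : Set ℝ := Subtype.val '' (H.symm '' S') with hT
  have hTpc : IsPreconnected T := hpre.image _ continuous_subtype_val.continuousOn
  have hmem : ∀ r : ℝ, r ∈ Set.Icc (0:ℝ) 1 → f r ∈ K → r ∈ T := by
    intro r hr hfK
    have hfA : f r ∈ A := by rw [← hfimg]; exact ⟨r, hr, rfl⟩
    have haS : (⟨f r, hfA⟩ : ↥A) ∈ S' := hfK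
    have hgu : g (H.symm ⟨f r, hfA⟩) = f r :=
      congrArg Subtype.val (H.apply_symm_apply (⟨f r, hfA⟩ : ↥A))
    have hueq : H.symm ⟨f r, hfA⟩ = ⟨r, hr⟩ := by
      apply hginj
      show g _ = g ⟨r, hr⟩
      rw [hgu]
      rfl
    exact ⟨H.symm ⟨f r, hfA⟩, Set.mem_image_of_mem _ haS, by rw [hueq]⟩
  have h0T : (0:ℝ) ∈ T := hmem 0 h0m (hf0 ▸ hxK)
  have h1T : (1:ℝ) ∈ T := hmem 1 h1m (hf1 ▸ hyK)
  have hIccT : Set.Icc (0:ℝ) 1 ⊆ T := hTpc.Icc_subset h0T h1T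
  -- conclude range g = A ⊆ K
  rw [hgrange, ← hfimg]
  rintro a ⟨r, hr, rfl⟩
  obtain ⟨u, huS, hur⟩ := hIccT hr
  obtain ⟨sA, hsAK, hsAu⟩ := huS
  have h1 : sA = H u := by rw [← hsAu, H.apply_symm_apply]
  have h2 : (sA : Plane) = f r := by
    rw [h1]
    show g u = f r
    show f ↑u = f r
    rw [hur]
  rw [← h2]
  exact hsAK

lemma hausdorffDist_range_le (f g : CIP) :
    hausdorffDist (Set.range f) (Set.range g) ≤ dist f g := by
  apply hausdorffDist_le_of_mem_dist dist_nonneg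
  · rintro x ⟨s, rfl⟩
    exact ⟨g s, ⟨s, rfl⟩, ContinuousMap.dist_apply_le_dist s⟩
  · rintro y ⟨s, rfl⟩
    exact ⟨f s, ⟨s, rfl⟩, by rw [dist_comm]; exact ContinuousMap.dist_apply_le_dist s⟩

-- the easy (backward) direction
lemma backward {X : Set Plane}
    (hF : ∃ F : (ℕ → Bool) → NonemptyCompacts Plane,
        Continuous F ∧
        (∀ c, IsArc (F c : Set Plane) ∧ (F c : Set Plane) ⊆ X) ∧
        (∀ c d, c ≠ d → Disjoint (F c : Set Plane) (F d : Set Plane))) :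
    ¬ IsSuslinian X := by
  obtain ⟨F, _, hFa, hFd⟩ := hF
  intro hs
  have hFinj : Function.Injective (fun c => (F c : Set Plane)) := by
    intro c d h
    by_contra hcd
    have hd := hFd c d hcd
    rw [show (F c : Set Plane) = F d from h] at hd
    obtain ⟨x, hx⟩ := (F d).nonempty
    exact Set.disjoint_left.mp hd hx hx
  have h0m : (0:ℝ) ∈ Set.Icc (0:ℝ) 1 := by constructor <;> norm_num
  have h1m : (1:ℝ) ∈ Set.Icc (0:ℝ) 1 := by constructor <;> norm_num
  set S := Set.range (fun c => (F c : Set Plane)) with hS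
  have hcount : S.Countable := by
    apply hs S
    · rintro K ⟨c, rfl⟩
      obtain ⟨a, b, f, hfc, hfinj, hfim, hf0, hf1⟩ := (hFa c).1
      simp only
      refine ⟨(hFa c).2, (F c).isCompact, ?_, ?_⟩
      · rw [← hfim]
        exact ⟨⟨f 0, Set.mem_image_of_mem f h0m⟩, isPreconnected_Icc.image f hfc⟩
      · refine ⟨f 0, ?_, f 1, ?_, fun h => ?_⟩
        · rw [← hfim]; exact Set.mem_image_of_mem f h0m
        · rw [← hfim]; exact Set.mem_image_of_mem f h1m
        · have := hfinj h0m h1m h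
          norm_num at this
    · rintro K ⟨c, rfl⟩ L ⟨d, rfl⟩ hKL
      exact hFd c d (fun h => hKL (by rw [h]))
  have hcnt : Countable ↥S := hcount.to_subtype
  have : Countable (ℕ → Bool) :=
    Function.Injective.countable
      (f := fun c : ℕ → Bool => (⟨(F c : Set Plane), Set.mem_range_self c⟩ : ↥S))
      (fun a b hab => hFinj (congrArg Subtype.val hab))
  haveI := uncountable_cantor
  exact not_countable ‹Countable (ℕ → Bool)›

lemma initial_family {X : Set Plane} (hX : IsDendroid X) (hns : ¬ IsSuslinian X) :
    ∃ A : Set CIP, GoodFam X A := by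
  rw [IsSuslinian] at hns
  push_neg at hns
  obtain ⟨S, hSK, hSdisj, hSunc⟩ := hns
  have hchoice : ∀ K : ↥S, ∃ g : CIP, Function.Injective g ∧ Set.range g ⊆ (K : Set Plane) := by
    rintro ⟨K, hK⟩
    obtain ⟨hKX, hKc, hKconn, hKnt⟩ := hSK K hK
    exact subcontinuum_arc hX hKX hKc hKconn hKnt
  choose φ hφinj hφsub using hchoice
  have hφi : Function.Injective φ := by
    intro K K' h
    by_contra hne
    have hKne : (K : Set Plane) ≠ ↑K' := fun hh => hne (Subtype.ext hh)
    have hd := Set.disjoint_of_subset (hφsub K) (hφsub K') (hSdisj K.2 K'.2 hKne)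
    rw [h] at hd
    obtain ⟨p, hp⟩ := Set.range_nonempty (φ K')
    exact Set.disjoint_left.mp hd hp hp
  refine ⟨Set.range φ, ?_, ?_, ?_, ?_⟩
  · rintro f ⟨K, rfl⟩
    exact (hφsub K).trans (hSK K K.2).1
  · rintro f ⟨K, rfl⟩
    exact hφinj K
  · rintro f ⟨K, rfl⟩ g ⟨K', rfl⟩ hfg
    have hKne : (K : Set Plane) ≠ ↑K' := by
      intro h
      exact hfg (congrArg φ (Subtype.ext h))
    exact Set.disjoint_of_subset (hφsub K) (hφsub K') (hSdisj K.2 K'.2 hKne)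
  · intro hc
    apply hSunc
    rw [← Set.countable_coe_iff]
    haveI : Countable ↥(Set.range φ) := hc.to_subtype
    haveI : Countable ↥S := Function.Injective.countable
      (f := fun K : ↥S => (⟨φ K, Set.mem_range_self K⟩ : ↥(Set.range φ)))
      (fun a b hab => hφi (congrArg Subtype.val hab))
    exact this

lemma root_exists {X : Set Plane} {A : Set CIP} (hA : GoodFam X A) :
    ∃ root : ND X, ∀ f ∈ root.A, dist f root.g ≤ 1 := by
  obtain ⟨A₀, A₁, g₀, g₁, γ, ζ, h0A, h1A, h0g, h1g, h0m, h1m, h0b, h1b, -⟩ :=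
    step hA (δ := 1) (ρ := 1) one_pos one_pos
  exact ⟨⟨A₀, g₀, h0g, h0m⟩, h0b⟩


lemma forward {X : Set Plane} (hX : IsDendroid X) (hns : ¬ IsSuslinian X) :
    ∃ F : (ℕ → Bool) → TopologicalSpace.NonemptyCompacts Plane,
      Continuous F ∧
      (∀ c, IsArc (F c : Set Plane) ∧ (F c : Set Plane) ⊆ X) ∧
      (∀ c d, c ≠ d → Disjoint (F c : Set Plane) (F d : Set Plane)) := by
  obtain ⟨A, hA⟩ := initial_family hX hns
  obtain ⟨root, hrootball⟩ := root_exists hA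
  have hXcl : IsClosed X := hX.1.isClosed
  set F : (ℕ → Bool) → TopologicalSpace.NonemptyCompacts Plane := fun c =>
    ⟨⟨Set.range (limF X root hrootball c),
      isCompact_range (limF X root hrootball c).continuous⟩, Set.range_nonempty _⟩ with hF
  have hcoe : ∀ c, (F c : Set Plane) = Set.range (limF X root hrootball c) := fun _ => rfl
  have hdisteq : ∀ u v : TopologicalSpace.NonemptyCompacts Plane,
      dist u v = hausdorffDist (u : Set Plane) (v : Set Plane) := fun _ _ => rfl
  refine ⟨F, ?_, ?_, ?_⟩
  · rw [continuous_iff_continuousAt]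
    intro c
    rw [ContinuousAt, Metric.tendsto_nhds]
    intro ε hε
    obtain ⟨n, hn⟩ := exists_pow_lt_of_lt_one (by linarith : (0:ℝ) < ε/2)
      (by norm_num : (1/2:ℝ) < 1)
    have hUopen : IsOpen {d : ℕ → Bool | ∀ i < n, d i = c i} := by
      have he : {d : ℕ → Bool | ∀ i < n, d i = c i} =
          ⋂ i ∈ Finset.range n, {d : ℕ → Bool | d i = c i} := by
        ext d
        simp [Finset.mem_range]
      rw [he]
      refine isOpen_biInter_finset fun i _ => ?_
      have hpre : {d : ℕ → Bool | d i = c i} = (fun d : ℕ → Bool => d i) ⁻¹' {c i} := rfl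
      rw [hpre]
      exact (continuous_apply i).isOpen_preimage _ (isOpen_discrete _)
    filter_upwards [hUopen.mem_nhds (by simp : c ∈ {d : ℕ → Bool | ∀ i < n, d i = c i})] with d hd
    have hdc : dist (limF X root hrootball d) (limF X root hrootball c) ≤ (1/2)^n * 2 :=
      limF_close X root hrootball n hd
    have hdist : hausdorffDist (Set.range (limF X root hrootball d))
        (Set.range (limF X root hrootball c)) ≤ (1/2)^n * 2 :=
      (hausdorffDist_range_le _ _).trans hdc
    rw [hdisteq, hcoe, hcoe]
    exact lt_of_le_of_lt hdist (by linarith)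
  · intro c
    constructor
    · rw [show (F c : Set Plane) = Set.range (limF X root hrootball c) from rfl]
      exact isArc_of_cm _ (limF_inj X root hrootball c)
    · rw [hcoe]
      rintro x ⟨s, rfl⟩
      exact limF_mem X root hrootball hXcl c s
  · intro c d hcd
    obtain ⟨ζ, hζ, hsep⟩ := limF_split X root hrootball hcd
    rw [hcoe, hcoe, Set.disjoint_left]
    rintro x ⟨s, rfl⟩ ⟨t, ht⟩
    have h1 := hsep s t
    rw [ht, dist_self] at h1
    linarith

end Stmt9Aux

/-- Proposition 2: a plane dendroid is non-Suslinian iff it contains a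
Cantor set of arcs, i.e. a continuous (in the Hausdorff metric) pairwise-disjoint
family of arcs indexed by the Cantor space. -/
theorem stmt_9 (X : Set Plane) (hX : IsDendroid X) :
    ¬ IsSuslinian X ↔
      ∃ F : (ℕ → Bool) → TopologicalSpace.NonemptyCompacts Plane,
        Continuous F ∧
        (∀ c, IsArc (F c : Set Plane) ∧ (F c : Set Plane) ⊆ X) ∧
        (∀ c d, c ≠ d → Disjoint (F c : Set Plane) (F d : Set Plane)) := by
  constructor
  · exact fun hns => Stmt9Aux.forward hX hns
  · exact fun h => Stmt9Aux.backward h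
end

section
/- Let X be a topological space, Q a quasicomponent of X, and p ∈ X. Suppose U is open in X with ∂U ⊂ Q, |∂U| = 2, and U \ {p} is a non-empty subset of Q. Then Q contains a non-degenerate connected subset of X. -/
open Set Filter Topology

/-- Lemma 11. -/
theorem stmt_13 {X : Type*} [TopologicalSpace X] (Q : Set X)
    (hQ : ∃ x : X, Q = {y | ∀ A : Set X, IsClopen A → x ∈ A → y ∈ A})
    (p : X) (U : Set X) (hU : IsOpen U)
    (hfr : frontier U ⊆ Q) (hcard : (frontier U).encard = 2)
    (hne : (U \ {p}).Nonempty) (hsub : U \ {p} ⊆ Q) :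
    ∃ S : Set X, S ⊆ Q ∧ S.Nontrivial ∧ IsConnected S := by
  classical
  obtain ⟨x, hQx⟩ := hQ
  -- quasicomponent property: a clopen set meeting Q contains Q
  have QL : ∀ C : Set X, IsClopen C → (C ∩ Q).Nonempty → Q ⊆ C := by
    rintro C hC ⟨y, hyC, hyQ⟩ z hz
    rw [hQx] at hyQ hz
    by_cases hx : x ∈ C
    · exact hz C hC hx
    · exact absurd hyC (hyQ Cᶜ hC.compl hx)
  obtain ⟨a, b, hab, hfr2⟩ := Set.encard_eq_two.mp hcard
  have haF : a ∈ frontier U := by rw [hfr2]; exact Set.mem_insert _ _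
  have haQ : a ∈ Q := hfr haF
  have haU : a ∉ U := by
    rw [hU.frontier_eq] at haF; exact haF.2
  -- reduction: an open set V with closure V ⊆ Q and frontier V ⊆ frontier U
  obtain ⟨V, hVo, hVU, hVne, hVQ, hVf⟩ :
      ∃ V : Set X, IsOpen V ∧ V ⊆ U ∧ V.Nonempty ∧ closure V ⊆ Q ∧
        frontier V ⊆ frontier U := by
    by_cases hp : p ∈ Q
    · refine ⟨U, hU, subset_rfl, hne.mono diff_subset, ?_, subset_rfl⟩
      intro y hy
      by_cases hyU : y ∈ U
      · by_cases hyp : y = p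
        · exact hyp ▸ hp
        · exact hsub ⟨hyU, hyp⟩
      · exact hfr (by rw [hU.frontier_eq]; exact ⟨hy, hyU⟩)
    · rw [hQx] at hp
      simp only [Set.mem_setOf_eq] at hp
      push_neg at hp
      obtain ⟨A, hA, hxA, hpA⟩ := hp
      refine ⟨U ∩ A, hU.inter hA.isOpen, inter_subset_left, ?_, ?_, ?_⟩
      · obtain ⟨u, hu⟩ := hne
        have huQ : u ∈ Q := hsub hu
        rw [hQx] at huQ
        exact ⟨u, hu.1, huQ A hA hxA⟩
      · intro y hy
        have hyA : y ∈ A := hA.isClosed.closure_subset ((closure_mono inter_subset_right) hy)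
        by_cases hyU : y ∈ U
        · exact hsub ⟨hyU, fun h => hpA (h ▸ hyA)⟩
        · exact hfr (by
            rw [hU.frontier_eq]
            exact ⟨(closure_mono inter_subset_left) hy, hyU⟩)
      · intro y hy
        rcases frontier_inter_subset U A hy with h | h
        · exact h.1
        · rw [hA.frontier_eq] at h
          exact absurd h.2 (Set.notMem_empty y)
  have hVQ' : V ⊆ Q := fun y hy => hVQ (subset_closure hy)
  have hFQ : frontier V ⊆ Q := fun y hy => hVQ (frontier_subset_closure hy)
  have hFab : frontier V ⊆ ({a, b} : Set X) := by rw [← hfr2]; exact hVf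
  -- the frontier of V is nonempty
  have hFne : (frontier V).Nonempty := by
    rw [Set.nonempty_iff_ne_empty]
    intro h
    have hclopen : IsClopen V := isClopen_iff_frontier_eq_empty.mpr h
    obtain ⟨v₀, hv₀⟩ := hVne
    have hQV : Q ⊆ V := QL V hclopen ⟨v₀, hv₀, hVQ' hv₀⟩
    exact haU (hVU (hQV haQ))
  -- L1: a relatively clopen subset of closure V missing the frontier is empty
  have L1 : ∀ O : Set X, IsOpen O → IsClosed (closure V ∩ O) →
      (closure V ∩ O) ∩ frontier V = ∅ → closure V ∩ O = ∅ := by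
    intro O hO hPc hPF
    have hPV : closure V ∩ O ⊆ V := by
      intro y hy
      by_contra hyV
      have hyF : y ∈ frontier V := by
        rw [hVo.frontier_eq]; exact ⟨hy.1, hyV⟩
      exact (Set.eq_empty_iff_forall_notMem.mp hPF y) ⟨hy, hyF⟩
    have hPO : closure V ∩ O = V ∩ O :=
      subset_antisymm (fun y hy => ⟨hPV hy, hy.2⟩)
        (fun y hy => ⟨subset_closure hy.1, hy.2⟩)
    rw [Set.eq_empty_iff_forall_notMem]
    intro y hy
    have hclopen : IsClopen (closure V ∩ O) := ⟨hPc, by rw [hPO]; exact hVo.inter hO⟩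
    have hQP : Q ⊆ closure V ∩ O := QL _ hclopen ⟨y, hy, hVQ hy.1⟩
    obtain ⟨t, htF⟩ := hFne
    exact (Set.eq_empty_iff_forall_notMem.mp hPF t) ⟨hQP (hFQ htF), htF⟩
  -- L4: a closed, relatively open piece whose frontier trace is one point is preconnected
  have L4 : ∀ O : Set X, IsOpen O → IsClosed (closure V ∩ O) → ∀ c : X,
      c ∈ closure V ∩ O → (closure V ∩ O) ∩ frontier V ⊆ {c} →
      IsPreconnected (closure V ∩ O) := by
    intro O hO hZc c hcZ hcF
    have key : ∀ u v : Set X, IsClosed u → IsClosed v → closure V ∩ O ⊆ u ∪ v →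
        Disjoint u v → c ∈ u → closure V ∩ O ⊆ u := by
      intro u v hu hv hcov hdis hcu
      have hzv : (closure V ∩ O) ∩ v = closure V ∩ (O ∩ uᶜ) := by
        ext y
        constructor
        · rintro ⟨hyZ, hyv⟩
          exact ⟨hyZ.1, hyZ.2, fun hyu => (Set.disjoint_left.mp hdis hyu) hyv⟩
        · rintro ⟨hyV, hyO, hyu⟩
          rcases hcov ⟨hyV, hyO⟩ with h | h
          · exact absurd h hyu
          · exact ⟨⟨hyV, hyO⟩, h⟩
      have hempty : closure V ∩ (O ∩ uᶜ) = ∅ := by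
        apply L1 _ (hO.inter hu.isOpen_compl)
        · rw [← hzv]; exact hZc.inter hv
        · rw [← hzv, Set.eq_empty_iff_forall_notMem]
          rintro y ⟨⟨hyZ, hyv⟩, hyF⟩
          have hyc : y = c := hcF ⟨hyZ, hyF⟩
          exact (Set.disjoint_left.mp hdis hcu) (hyc ▸ hyv)
      intro y hy
      rcases hcov hy with h | h
      · exact h
      · have : y ∈ (closure V ∩ O) ∩ v := ⟨hy, h⟩
        rw [hzv, hempty] at this
        exact this.elim
    rw [isPreconnected_iff_subset_of_fully_disjoint_closed hZc]
    intro u v hu hv hcov hdis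
    rcases hcov hcZ with hcu | hcv
    · exact Or.inl (key u v hu hv hcov hdis hcu)
    · exact Or.inr (key v u hv hu (by rwa [Set.union_comm]) hdis.symm hcv)
  by_cases hYp : IsPreconnected (closure V)
  · obtain ⟨v₀, hv₀⟩ := hVne
    obtain ⟨t, htF⟩ := hFne
    have htV : t ∉ V := by rw [hVo.frontier_eq] at htF; exact htF.2
    exact ⟨closure V, hVQ,
      ⟨t, frontier_subset_closure htF, v₀, subset_closure hv₀,
        fun h => htV (by rw [h]; exact hv₀)⟩,
      ⟨v₀, subset_closure hv₀⟩, hYp⟩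
  · rw [isPreconnected_iff_subset_of_fully_disjoint_closed isClosed_closure] at hYp
    push_neg at hYp
    obtain ⟨u, v, hu, hv, hcov, hdis, hYu, hYv⟩ := hYp
    have helper : ∀ u v : Set X, IsClosed u → IsClosed v → closure V ⊆ u ∪ v →
        Disjoint u v → ¬(closure V ⊆ v) → ¬(closure V ⊆ u) → ∀ w, w ∈ V ∩ u →
        ∃ S, S ⊆ Q ∧ S.Nontrivial ∧ IsConnected S := by
      intro u v hu hv hcov hdis hYv' hYu' w hw
      have hZeq : closure V ∩ u = closure V ∩ vᶜ := by
        ext y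
        constructor
        · rintro ⟨hyY, hyu⟩; exact ⟨hyY, fun hyv => Set.disjoint_left.mp hdis hyu hyv⟩
        · rintro ⟨hyY, hyv⟩
          rcases hcov hyY with h | h
          · exact ⟨hyY, h⟩
          · exact absurd h hyv
      have hZeq2 : closure V ∩ v = closure V ∩ uᶜ := by
        ext y
        constructor
        · rintro ⟨hyY, hyv⟩; exact ⟨hyY, fun hyu => Set.disjoint_left.mp hdis hyu hyv⟩
        · rintro ⟨hyY, hyu⟩
          rcases hcov hyY with h | h
          · exact absurd h hyu
          · exact ⟨hyY, h⟩
      have hZc : IsClosed (closure V ∩ vᶜ) := by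
        rw [← hZeq]; exact isClosed_closure.inter hu
      have hZc2 : IsClosed (closure V ∩ uᶜ) := by
        rw [← hZeq2]; exact isClosed_closure.inter hv
      have hc₁ : ((closure V ∩ vᶜ) ∩ frontier V).Nonempty := by
        rw [Set.nonempty_iff_ne_empty]
        intro h
        have hz := L1 vᶜ hv.isOpen_compl hZc h
        rw [← hZeq] at hz
        apply hYv'
        intro y hy
        rcases hcov hy with h' | h'
        · exact absurd (show y ∈ closure V ∩ u from ⟨hy, h'⟩)
            (by rw [hz]; exact Set.notMem_empty y)
        · exact h'
      have hc₂ : ((closure V ∩ uᶜ) ∩ frontier V).Nonempty := by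
        rw [Set.nonempty_iff_ne_empty]
        intro h
        have hz := L1 uᶜ hu.isOpen_compl hZc2 h
        rw [← hZeq2] at hz
        apply hYu'
        intro y hy
        rcases hcov hy with h' | h'
        · exact h'
        · exact absurd (show y ∈ closure V ∩ v from ⟨hy, h'⟩)
            (by rw [hz]; exact Set.notMem_empty y)
      obtain ⟨c₁, hc₁Z, hc₁F⟩ := hc₁
      obtain ⟨c₂, hc₂Z, hc₂F⟩ := hc₂
      have hc₁u : c₁ ∈ u := by
        have h' : c₁ ∈ closure V ∩ u := by rw [hZeq]; exact hc₁Z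
        exact h'.2
      have hc12 : c₁ ≠ c₂ := fun h => hc₂Z.2 (h ▸ hc₁u)
      have hpair : ∀ y ∈ frontier V, y = c₁ ∨ y = c₂ := by
        intro y hy
        have hy' := hFab hy
        have h1 := hFab hc₁F
        have h2 := hFab hc₂F
        simp only [Set.mem_insert_iff, Set.mem_singleton_iff] at hy' h1 h2
        rcases hy' with rfl | rfl <;> rcases h1 with h1 | h1 <;> rcases h2 with h2 | h2 <;>
          first
          | exact Or.inl h1.symm
          | exact Or.inr h2.symm
          | exact absurd (h1.trans h2.symm) hc12
      have hcsub : (closure V ∩ vᶜ) ∩ frontier V ⊆ {c₁} := by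
        rintro y ⟨hyZ, hyF⟩
        rcases hpair y hyF with h | h
        · exact h
        · exfalso
          rw [h] at hyZ
          have h' : c₂ ∈ closure V ∩ u := by rw [hZeq]; exact hyZ
          exact hc₂Z.2 h'.2
      have hpre : IsPreconnected (closure V ∩ vᶜ) := L4 vᶜ hv.isOpen_compl hZc c₁ hc₁Z hcsub
      have hwZ : w ∈ closure V ∩ vᶜ := by
        rw [← hZeq]; exact ⟨subset_closure hw.1, hw.2⟩
      have hc₁V : c₁ ∉ V := by rw [hVo.frontier_eq] at hc₁F; exact hc₁F.2
      refine ⟨closure V ∩ vᶜ, fun y hy => hVQ hy.1,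
        ⟨c₁, hc₁Z, w, hwZ, fun h => hc₁V (by rw [h]; exact hw.1)⟩,
        ⟨c₁, hc₁Z⟩, hpre⟩
    obtain ⟨v₀, hv₀⟩ := hVne
    rcases hcov (subset_closure hv₀) with h | h
    · exact helper u v hu hv hcov hdis hYv hYu v₀ ⟨hv₀, h⟩
    · exact helper v u hv hu (by rwa [Set.union_comm]) hdis.symm hYu hYv v₀ ⟨hv₀, h⟩
end

section
/- Let Z be a zero-dimensional separable metric space and φ : Z → [0,∞) an upper semi-continuous function. Then the graph of φ, as a subspace of Z × [0,∞), is almost zero-dimensional. -/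
open Set Filter Topology

/-- Proposition: graph of a USC function over a zero-dimensional
domain is almost zero-dimensional. -/
theorem stmt_15 {Z : Type*} [MetricSpace Z] [TopologicalSpace.SeparableSpace Z]
    (hZ : IsZeroDimensionalSpace Z) (φ : Z → ℝ) (hnn : ∀ z, 0 ≤ φ z)
    (husc : UpperSemicontinuous φ) :
    IsAlmostZeroDimensionalSpace ↥{q : Z × ℝ | q.2 = φ q.1} := by
  intro x U hU hxU
  obtain ⟨W, hW, hWU⟩ := isOpen_induced_iff.mp hU
  have hxW : (x : Z × ℝ) ∈ W := by rw [← hWU] at hxU; exact hxU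
  obtain ⟨ε, hε, hball⟩ := Metric.isOpen_iff.mp hW _ hxW
  set z : Z := (x : Z × ℝ).1 with hz
  set r : ℝ := φ z with hr
  have hx2 : (x : Z × ℝ).2 = r := x.2
  set δ : ℝ := ε / 2 with hδ
  have hδpos : 0 < δ := by positivity
  -- clopen C around z
  obtain ⟨C, hCclopen, hzC, hCsub⟩ := hZ z (Metric.ball z ε ∩ φ ⁻¹' Iio (r + δ))
    (Metric.isOpen_ball.inter (husc.isOpen_preimage _))
    ⟨Metric.mem_ball_self hε, by simp [hr, hδpos]⟩
  -- for each w with small φ, a clopen D w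
  have hD : ∀ w : Z, ∃ D : Set Z,
      φ w < r - δ → IsClopen D ∧ w ∈ D ∧ D ⊆ φ ⁻¹' Iio (r - δ) := by
    intro w
    by_cases h : φ w < r - δ
    · obtain ⟨D, h1, h2, h3⟩ := hZ w (φ ⁻¹' Iio (r - δ)) (husc.isOpen_preimage _) h
      exact ⟨D, fun _ => ⟨h1, h2, h3⟩⟩
    · exact ⟨∅, fun h' => absurd h' h⟩
  choose D hDspec using hD
  set 𝒞 : Set (Set ↥{q : Z × ℝ | q.2 = φ q.1}) :=
    insert ((Subtype.val : ↥{q : Z × ℝ | q.2 = φ q.1} → Z × ℝ) ⁻¹' (C ×ˢ univ))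
      {E | ∃ w : Z, φ w < r - δ ∧
        E = (Subtype.val : ↥{q : Z × ℝ | q.2 = φ q.1} → Z × ℝ) ⁻¹' ((D w)ᶜ ×ˢ univ)} with h𝒞
  refine ⟨⋂₀ 𝒞, ?_, ?_, 𝒞, ?_, rfl⟩
  · -- neighborhood of x
    refine Filter.mem_of_superset
      (((hCclopen.isOpen.prod isOpen_Ioi).preimage continuous_subtype_val).mem_nhds
        (show x ∈ _ from ⟨hzC, show (x : Z × ℝ).2 ∈ Ioi (r - δ) by rw [mem_Ioi, hx2]; linarith⟩)) ?_
    intro p hp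
    have hp1 : (p : Z × ℝ).1 ∈ C := hp.1
    have hp2 : r - δ < (p : Z × ℝ).2 := hp.2
    intro E hE
    rcases hE with hE | ⟨w, hw, rfl⟩
    · rw [hE]; exact ⟨hp1, mem_univ _⟩
    · refine ⟨fun hmem => ?_, mem_univ _⟩
      have := (hDspec w hw).2.2 hmem
      have hp2' : (p : Z × ℝ).2 = φ (p : Z × ℝ).1 := p.2
      simp only [mem_preimage, mem_Iio] at this
      linarith
  · -- contained in U
    intro p hp
    have hpC : (p : Z × ℝ).1 ∈ C := (hp _ (mem_insert _ _)).1
    have hpball := hCsub hpC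
    have hp2' : (p : Z × ℝ).2 = φ (p : Z × ℝ).1 := p.2
    have hupper : φ (p : Z × ℝ).1 < r + δ := hpball.2
    have hlower : r - δ ≤ φ (p : Z × ℝ).1 := by
      by_contra h
      push_neg at h
      have hmem : (Subtype.val : ↥{q : Z × ℝ | q.2 = φ q.1} → Z × ℝ) ⁻¹' ((D (p : Z × ℝ).1)ᶜ ×ˢ univ) ∈ 𝒞 :=
        mem_insert_of_mem _ ⟨(p : Z × ℝ).1, h, rfl⟩
      exact (hp _ hmem).1 ((hDspec _ h).2.1)
    rw [← hWU]
    apply hball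
    rw [Metric.mem_ball, Prod.dist_eq]
    refine max_lt (hpball.1) ?_
    rw [Real.dist_eq, hx2, hp2', abs_lt]
    constructor <;> [linarith; linarith]
  · -- all clopen
    intro E hE
    rcases hE with hE | ⟨w, hw, rfl⟩
    · rw [hE]
      exact (hCclopen.prod isClopen_univ).preimage continuous_subtype_val
    · exact (((hDspec w hw).1.compl).prod isClopen_univ).preimage continuous_subtype_val
end
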